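/- arXiv:2011.08530 — 4 statements merged into one kernel-verified Lean document; each statement's English description precedes it below -/
import Mathlib

section
/- Let X be a ℤ^d-valued random vector such that a^T X has infinitely divisible distribution for every a ∈ ℝ^d. Then the distribution of X is infinitely divisible. -/
open MeasureTheory Complex Real Filter Topology

noncomputable section

/-- convolution of two measures on an additive monoid -/
def mconv {V : Type*} [MeasurableSpace V] [Add V] (μ ν : Measure V) : Measure V :=
  (μ.prod ν).map (fun p => p.1 + p.2)

/-- n-fold convolution power -/
def convPow {V : Type*} [MeasurableSpace V] [AddMonoid V] (μ : Measure V) : ℕ → Measure V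
  | 0 => Measure.dirac 0
  | n + 1 => mconv μ (convPow μ n)

/-- a probability measure is infinitely divisible -/
def InfDiv {V : Type*} [MeasurableSpace V] [AddMonoid V] (μ : Measure V) : Prop :=
  ∀ n : ℕ, 0 < n → ∃ ρ : Measure V, IsProbabilityMeasure ρ ∧ μ = convPow ρ n

/-- characteristic function of a measure on ℝ^d -/
def charFun {d : ℕ} (μ : Measure (Fin d → ℝ)) (z : Fin d → ℝ) : ℂ :=
  ∫ x, Complex.exp (Complex.I * (∑ j, z j * x j)) ∂μ

/-- embedding of the lattice ℤ^d into ℝ^d -/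
def intCast {d : ℕ} (n : Fin d → ℤ) : Fin d → ℝ := fun j => (n j : ℝ)

/-- μ is concentrated on ℤ^d -/
def ZdValued {d : ℕ} (μ : Measure (Fin d → ℝ)) : Prop :=
  μ (Set.range (intCast (d := d))) = 1

/-- integral of a complex-valued function against a (finite) signed measure -/
def sIntegral {α : Type*} [MeasurableSpace α] (ν : SignedMeasure α) (f : α → ℂ) : ℂ :=
  (∫ x, f x ∂ν.toJordanDecomposition.posPart) - ∫ x, f x ∂ν.toJordanDecomposition.negPart

/-- integral of a complex-valued function against a (finite) complex measure -/
def cIntegral {α : Type*} [MeasurableSpace α] (ν : ComplexMeasure α) (f : α → ℂ) : ℂ :=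
  sIntegral ν.re f + Complex.I * sIntegral ν.im f

/-- a vector measure vanishes outside the set `S` -/
def SupportedIn {α M : Type*} [MeasurableSpace α] [AddCommMonoid M] [TopologicalSpace M]
    (ν : VectorMeasure α M) (S : Set α) : Prop :=
  ∀ B : Set α, MeasurableSet B → B ∩ S = ∅ → ν B = 0

/-- the lattice ℤ^d minus the origin, as a subset of ℝ^d -/
def latticeNZ (d : ℕ) : Set (Fin d → ℝ) :=
  {x | ∃ n : Fin d → ℤ, n ≠ 0 ∧ x = intCast n}

/-- membership in the d-dimensional Wiener algebra -/
def InWiener {d : ℕ} (f : (Fin d → ℝ) → ℂ) : Prop :=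
  ∃ c : (Fin d → ℤ) → ℂ, Summable (fun n => ‖c n‖) ∧
    ∀ z, f z = ∑' n : Fin d → ℤ, c n * Complex.exp (Complex.I * (∑ j, (n j : ℝ) * z j))

/-- Euclidean norm on `Fin d → ℝ` -/
def enorm' {d : ℕ} (x : Fin d → ℝ) : ℝ := Real.sqrt (∑ j, x j ^ 2)

end


section Aux
open MeasureTheory
variable {V : Type*} [MeasurableSpace V]

open MeasureTheory
variable {V : Type*} [MeasurableSpace V]

lemma CW.mconv_prob [Add V] (hadd : Measurable fun p : V × V => p.1 + p.2)
    (μ ν : Measure V) [IsProbabilityMeasure μ] [IsProbabilityMeasure ν] :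
    IsProbabilityMeasure (mconv μ ν) :=
  Measure.isProbabilityMeasure_map hadd.aemeasurable

lemma CW.convPow_prob [AddMonoid V] (hadd : Measurable fun p : V × V => p.1 + p.2)
    (μ : Measure V) [IsProbabilityMeasure μ] (n : ℕ) :
    IsProbabilityMeasure (convPow μ n) := by
  induction n with
  | zero => show IsProbabilityMeasure (Measure.dirac (0:V)); infer_instance
  | succ n ih => exact CW.mconv_prob hadd μ (convPow μ n)

lemma CW.mconv_apply_eq [Add V] (hadd : Measurable fun p : V × V => p.1 + p.2)
    (σ τ : Measure V) {S : Set V} (hS : MeasurableSet S) :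
    mconv σ τ S = (σ.prod τ) ((fun p : V × V => p.1 + p.2) ⁻¹' S) :=
  Measure.map_apply hadd hS

lemma CW.mconv_conc [Add V] (hadd : Measurable fun p : V × V => p.1 + p.2)
    (σ τ : Measure V) [IsProbabilityMeasure σ] [IsProbabilityMeasure τ]
    {A B S : Set V} (hA : MeasurableSet A) (hB : MeasurableSet B) (hS : MeasurableSet S)
    (hσ : σ A = 1) (hτ : τ B = 1) (hsum : ∀ x ∈ A, ∀ y ∈ B, x + y ∈ S) :
    mconv σ τ S = 1 := by
  have hprob : IsProbabilityMeasure (mconv σ τ) := CW.mconv_prob hadd σ τ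
  refine le_antisymm prob_le_one ?_
  rw [CW.mconv_apply_eq hadd σ τ hS]
  calc (1:ENNReal) = σ A * τ B := by rw [hσ, hτ, one_mul]
    _ = σ.prod τ (A ×ˢ B) := (Measure.prod_prod A B).symm
    _ ≤ _ := measure_mono (fun p hp => hsum _ hp.1 _ hp.2)

lemma CW.mconv_singleton_ge [Add V] [MeasurableSingletonClass V]
    (hadd : Measurable fun p : V × V => p.1 + p.2)
    (σ τ : Measure V) [SFinite σ] [SFinite τ] (x y : V) :
    σ {x} * τ {y} ≤ mconv σ τ {x + y} := by
  rw [CW.mconv_apply_eq hadd σ τ (measurableSet_singleton _)]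
  calc σ {x} * τ {y} = σ.prod τ ({x} ×ˢ {y}) := (Measure.prod_prod _ _).symm
    _ ≤ _ := measure_mono (by
        rintro ⟨p1, p2⟩ ⟨h1, h2⟩
        simp only [Set.mem_singleton_iff] at *
        simp [h1, h2])

lemma CW.convPow_singleton_ge [AddCommMonoid V] [MeasurableSingletonClass V]
    (hadd : Measurable fun p : V × V => p.1 + p.2)
    (σ : Measure V) [SFinite σ] [IsProbabilityMeasure σ] (x : V) (n : ℕ) :
    σ {x} ^ n ≤ convPow σ n {n • x} := by
  induction n with
  | zero => simp [convPow, Measure.dirac_apply' _ (measurableSet_singleton _)]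
  | succ n ih =>
      have h1 : σ {x} ^ (n+1) = σ {x} * σ {x} ^ n := by ring
      rw [h1]
      have hpp : IsProbabilityMeasure (convPow σ n) := CW.convPow_prob hadd σ n
      calc σ {x} * σ {x} ^ n ≤ σ {x} * convPow σ n {n • x} := by
            exact mul_le_mul_right ih _
        _ ≤ mconv σ (convPow σ n) {x + n • x} := CW.mconv_singleton_ge hadd _ _ _ _
        _ = convPow σ (n+1) {(n+1) • x} := by rw [succ_nsmul']; rfl

lemma CW.exists_shift [Add V] (hadd : Measurable fun p : V × V => p.1 + p.2)
    (σ τ : Measure V) [IsProbabilityMeasure σ] [IsProbabilityMeasure τ]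
    {S : Set V} (hS : MeasurableSet S) (hconc : mconv σ τ S = 1) :
    ∃ y : V, σ {x | x + y ∈ S} = 1 := by
  set E := (fun p : V × V => p.1 + p.2) ⁻¹' S with hE
  have hEm : MeasurableSet E := hadd hS
  have h1 : ∫⁻ y, σ ((fun x => (x, y)) ⁻¹' E) ∂τ = 1 := by
    rw [← Measure.prod_apply_symm hEm, ← CW.mconv_apply_eq hadd σ τ hS]; exact hconc
  set g : V → ENNReal := fun y => σ ((fun x => (x, y)) ⁻¹' E) with hg
  have hgm : Measurable g := measurable_measure_prodMk_right hEm
  have hgle : ∀ y, g y ≤ 1 := fun y => prob_le_one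
  have h2 : ∫⁻ y, (1 : ENNReal) - g y ∂τ = 0 := by
    rw [lintegral_sub hgm (by rw [h1]; exact ENNReal.one_ne_top)
      (Filter.Eventually.of_forall hgle), h1, lintegral_one, measure_univ, tsub_self]
  have h3 : ∀ᵐ y ∂τ, (1:ENNReal) - g y = 0 :=
    (lintegral_eq_zero_iff (measurable_const.sub hgm)).mp h2
  have h4 : ∀ᵐ y ∂τ, g y = 1 :=
    h3.mono (fun y hy => le_antisymm (hgle y) (tsub_eq_zero_iff_le.mp hy))
  obtain ⟨y, hy⟩ := h4.exists
  exact ⟨y, hy⟩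

lemma CW.measure_eq_inter {σ : Measure V} [IsFiniteMeasure σ] {S : Set V}
    (hSm : MeasurableSet S) (hS : σ S = σ Set.univ) (B : Set V) : σ B = σ (B ∩ S) := by
  have hc : σ Sᶜ = 0 := by
    rw [measure_compl hSm (measure_ne_top σ S), hS, tsub_self]
  refine le_antisymm ?_ (measure_mono Set.inter_subset_left)
  calc σ B ≤ σ ((B ∩ S) ∪ Sᶜ) := measure_mono (fun x hx => by
        by_cases h : x ∈ S
        · exact Or.inl ⟨hx, h⟩
        · exact Or.inr h)
    _ ≤ σ (B ∩ S) + σ Sᶜ := measure_union_le _ _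
    _ = σ (B ∩ S) := by rw [hc, add_zero]

lemma CW.ext_of_singletons [MeasurableSingletonClass V] {ι : Type*} [Countable ι]
    {σ τ : Measure V} [IsFiniteMeasure σ] [IsFiniteMeasure τ]
    {y : ι → V} (hy : Function.Injective y)
    (hσ : σ (Set.range y) = σ Set.univ) (hτ : τ (Set.range y) = τ Set.univ)
    (hst : ∀ i, σ {y i} = τ {y i}) : σ = τ := by
  have hrm : MeasurableSet (Set.range y) := (Set.countable_range y).measurableSet
  ext B hB
  have key : ∀ (κ : Measure V), IsFiniteMeasure κ → κ (Set.range y) = κ Set.univ →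
      κ B = ∑' i, κ (B ∩ {y i}) := by
    intro κ hκfin hκ
    rw [CW.measure_eq_inter (σ := κ) hrm hκ B]
    have hBU : B ∩ Set.range y = ⋃ i, B ∩ {y i} := by
      ext x
      simp only [Set.mem_inter_iff, Set.mem_range, Set.mem_iUnion, Set.mem_singleton_iff]
      constructor
      · rintro ⟨hxB, i, rfl⟩; exact ⟨i, hxB, rfl⟩
      · rintro ⟨i, hxB, rfl⟩; exact ⟨hxB, i, rfl⟩
    rw [hBU, measure_iUnion ?_ (fun i => hB.inter (measurableSet_singleton _))]
    intro i j hij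
    refine Disjoint.mono Set.inter_subset_right Set.inter_subset_right ?_
    simp only [Set.disjoint_singleton]
    exact fun hcon => hij (hy hcon)
  rw [key σ ‹_› hσ, key τ ‹_› hτ]
  refine tsum_congr fun i => ?_
  by_cases hmem : y i ∈ B
  · have hint : B ∩ {y i} = {y i} := by
      apply Set.inter_eq_self_of_subset_right
      simpa using hmem
    rw [hint, hst]
  · have hint : B ∩ {y i} = ∅ := by
      ext x; simp only [Set.mem_inter_iff, Set.mem_singleton_iff, Set.mem_empty_iff_false,
        iff_false, not_and]
      rintro hxB rfl; exact hmem hxB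
    rw [hint, measure_empty, measure_empty]

lemma CW.measure_range [MeasurableSingletonClass V] {ι : Type*} [Countable ι]
    (σ : Measure V) {y : ι → V} (hy : Function.Injective y) :
    σ (Set.range y) = ∑' i, σ {y i} := by
  have hru : Set.range y = ⋃ i, {y i} := by
    ext x
    simp only [Set.mem_range, Set.mem_iUnion, Set.mem_singleton_iff]
    exact ⟨fun ⟨i, hi⟩ => ⟨i, hi.symm⟩, fun ⟨i, hi⟩ => ⟨i, hi.symm⟩⟩
  rw [hru, measure_iUnion ?_ (fun i => measurableSet_singleton _)]
  intro i j hij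
  simp only [Set.disjoint_singleton]
  exact fun hcon => hij (hy hcon)

lemma CW.map_mconv {W : Type*} [MeasurableSpace W] [Add V] [Add W]
    (haddV : Measurable fun p : V × V => p.1 + p.2)
    (haddW : Measurable fun p : W × W => p.1 + p.2)
    {L : V → W} (hL : Measurable L) (hLadd : ∀ x y, L (x + y) = L x + L y)
    (σ τ : Measure V) [SFinite σ] [SFinite τ] :
    (mconv σ τ).map L = mconv (σ.map L) (τ.map L) := by
  unfold mconv
  rw [Measure.map_prod_map _ _ hL hL, Measure.map_map haddW (hL.prodMap hL),
    Measure.map_map hL haddV]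
  congr 1
  ext p
  show L (p.1 + p.2) = L p.1 + L p.2
  exact hLadd p.1 p.2

lemma CW.map_convPow {W : Type*} [MeasurableSpace W] [AddMonoid V] [AddMonoid W]
    (haddV : Measurable fun p : V × V => p.1 + p.2)
    (haddW : Measurable fun p : W × W => p.1 + p.2)
    {L : V → W} (hL : Measurable L) (hLadd : ∀ x y, L (x + y) = L x + L y) (hL0 : L 0 = 0)
    (σ : Measure V) [IsProbabilityMeasure σ] (n : ℕ) :
    (convPow σ n).map L = convPow (σ.map L) n := by
  induction n with
  | zero => show (Measure.dirac (0:V)).map L = Measure.dirac (0:W)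
            rw [Measure.map_dirac' hL, hL0]
  | succ n ih =>
      show (mconv σ (convPow σ n)).map L = mconv (σ.map L) (convPow (σ.map L) n)
      have hp : IsProbabilityMeasure (convPow σ n) := CW.convPow_prob haddV σ n
      rw [CW.map_mconv haddV haddW hL hLadd σ (convPow σ n), ih]


end Aux


lemma CW.exists_inj (d : ℕ) :
    ∃ a : Fin d → ℝ, Function.Injective (fun m : Fin d → ℤ => ∑ j : Fin d, a j * (m j : ℝ)) := by
  have ht : Transcendental ℤ (liouvilleNumber 2) := transcendental_liouvilleNumber (le_refl 2)
  set t : ℝ := liouvilleNumber 2 with htdef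
  refine ⟨fun j => t ^ ((j : ℕ) + 1), ?_⟩
  have key : ∀ c : Fin d → ℤ, (∑ j : Fin d, t ^ ((j : ℕ) + 1) * (c j : ℝ)) = 0 → c = 0 := by
    intro c hc
    by_contra hc0
    obtain ⟨j₀, hj₀⟩ : ∃ j₀, c j₀ ≠ 0 := by
      by_contra hall
      push_neg at hall
      exact hc0 (funext fun j => hall j)
    set p : Polynomial ℤ := ∑ j : Fin d, Polynomial.C (c j) * Polynomial.X ^ ((j : ℕ) + 1) with hp
    have hev : (Polynomial.aeval t) p = 0 := by
      rw [hp, map_sum]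
      simp only [map_mul, Polynomial.aeval_C, map_pow, Polynomial.aeval_X,
        algebraMap_int_eq, eq_intCast, map_intCast]
      rw [← hc]
      exact Finset.sum_congr rfl fun j _ => mul_comm _ _
    have hcoeff : p.coeff ((j₀ : ℕ) + 1) = c j₀ := by
      rw [hp, Polynomial.finset_sum_coeff]
      rw [Finset.sum_eq_single j₀]
      · simp [Polynomial.coeff_C_mul, Polynomial.coeff_X_pow]
      · intro j _ hj
        have : ((j₀ : ℕ) + 1) ≠ ((j : ℕ) + 1) := by
          simp only [ne_eq, Nat.add_right_cancel_iff]
          exact fun hcon => hj (Fin.ext hcon.symm)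
        rw [Polynomial.coeff_C_mul, Polynomial.coeff_X_pow, if_neg this, mul_zero]
      · intro hcon
        exact absurd (Finset.mem_univ j₀) hcon
    have hp0 : p ≠ 0 := by
      intro hzero
      rw [hzero] at hcoeff
      simp at hcoeff
      exact hj₀ hcoeff.symm
    exact ht ⟨p, hp0, hev⟩
  intro m m' hmm
  simp only at hmm
  have h1 : (∑ j : Fin d, t ^ ((j : ℕ) + 1) * ((m - m') j : ℝ)) = 0 := by
    have : ∀ j : Fin d, t ^ ((j : ℕ) + 1) * (((m - m') j : ℤ) : ℝ)
        = t ^ ((j : ℕ) + 1) * (m j : ℝ) - t ^ ((j : ℕ) + 1) * (m' j : ℝ) := by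
      intro j
      have : ((m - m') j : ℤ) = m j - m' j := rfl
      rw [this]
      push_cast
      ring
    rw [Finset.sum_congr rfl (fun j _ => this j), Finset.sum_sub_distrib, hmm, sub_self]
  have := key (m - m') h1
  exact sub_eq_zero.mp this

theorem stmt10 {d : ℕ} {Ω : Type*} [MeasurableSpace Ω] (P : Measure Ω) [IsProbabilityMeasure P]
    (X : Ω → Fin d → ℝ) (hX : Measurable X)
    (hZd : ∀ ω, ∃ n : Fin d → ℤ, X ω = intCast n)
    (h : ∀ a : Fin d → ℝ, InfDiv (P.map (fun ω => ∑ j, a j * X ω j))) :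
    InfDiv (P.map X) := by
  classical
  obtain ⟨a, hTinj⟩ := CW.exists_inj d
  set T : (Fin d → ℤ) → ℝ := fun m => ∑ j : Fin d, a j * (m j : ℝ) with hTdef
  set L : (Fin d → ℝ) → ℝ := fun x => ∑ j : Fin d, a j * x j with hLdef
  have hL : Measurable L :=
    Finset.measurable_sum _ (fun j _ => by fun_prop)
  have hLadd : ∀ x y : Fin d → ℝ, L (x + y) = L x + L y := by
    intro x y
    show (∑ j : Fin d, a j * (x + y) j) = _
    simp only [Pi.add_apply, mul_add]
    rw [Finset.sum_add_distrib]
  have hL0 : L 0 = 0 := by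
    show (∑ j : Fin d, a j * (0 : Fin d → ℝ) j) = 0
    simp
  have hLT : ∀ m : Fin d → ℤ, L (intCast m) = T m := fun m => rfl
  have hTsub : ∀ m m' : Fin d → ℤ, T (m - m') = T m - T m' := by
    intro m m'
    show (∑ j : Fin d, a j * ((m - m') j : ℝ)) = _
    rw [← Finset.sum_sub_distrib]
    refine Finset.sum_congr rfl fun j _ => ?_
    have : ((m - m') j : ℤ) = m j - m' j := rfl
    rw [this]
    push_cast
    ring
  have hintadd : ∀ m m' : Fin d → ℤ, intCast (m + m') = intCast m + intCast m' := by
    intro m m'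
    funext j
    show (((m + m') j : ℤ) : ℝ) = (m j : ℝ) + (m' j : ℝ)
    have : ((m + m') j : ℤ) = m j + m' j := rfl
    rw [this]
    push_cast
    ring
  have haddV : Measurable fun p : (Fin d → ℝ) × (Fin d → ℝ) => p.1 + p.2 := measurable_add
  have haddR : Measurable fun p : ℝ × ℝ => p.1 + p.2 := measurable_add
  set μ : Measure (Fin d → ℝ) := P.map X with hμdef
  haveI hμprob : IsProbabilityMeasure μ := Measure.isProbabilityMeasure_map hX.aemeasurable
  have hintinj : Function.Injective (intCast (d := d)) := by
    intro m m' hmm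
    funext j
    have h2 := congrFun hmm j
    simp only [intCast] at h2
    exact_mod_cast h2
  set S : Set (Fin d → ℝ) := Set.range (intCast (d := d)) with hSdef
  have hSm : MeasurableSet S := (Set.countable_range _).measurableSet
  have hμS : μ S = 1 := by
    rw [hμdef, Measure.map_apply hX hSm]
    have hpre : X ⁻¹' S = Set.univ := by
      refine Set.eq_univ_of_forall fun ω => ?_
      obtain ⟨n, hn⟩ := hZd ω
      exact ⟨n, hn.symm⟩
    rw [hpre, measure_univ]
  intro n hn
  obtain ⟨nn, rfl⟩ : ∃ nn, n = nn + 1 := ⟨n - 1, (Nat.succ_pred_eq_of_pos hn).symm⟩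
  obtain ⟨ρa, hρaprob, hρaeq⟩ := h a (nn + 1) hn
  haveI := hρaprob
  have hmapmap : P.map (fun ω => ∑ j, a j * X ω j) = μ.map L := by
    rw [hμdef, Measure.map_map hL hX]
    rfl
  have hνeq : μ.map L = convPow ρa (nn + 1) := by rw [← hmapmap]; exact hρaeq
  haveI hνprob : IsProbabilityMeasure (μ.map L) := Measure.isProbabilityMeasure_map hL.aemeasurable
  set C : Set ℝ := Set.range T with hCdef
  have hCm : MeasurableSet C := (Set.countable_range _).measurableSet
  have hνC : μ.map L C = 1 := by
    refine le_antisymm prob_le_one ?_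
    rw [Measure.map_apply hL hCm]
    calc (1 : ENNReal) = μ S := hμS.symm
      _ ≤ μ (L ⁻¹' C) := measure_mono (by
          rintro x ⟨m, rfl⟩
          exact ⟨m, (hLT m).symm⟩)
  haveI hpowa : IsProbabilityMeasure (convPow ρa nn) := CW.convPow_prob haddR ρa nn
  obtain ⟨y, hy⟩ := CW.exists_shift haddR ρa (convPow ρa nn) hCm (by
    show mconv ρa (convPow ρa nn) C = 1
    have : mconv ρa (convPow ρa nn) = convPow ρa (nn + 1) := rfl
    rw [this, ← hνeq]
    exact hνC)
  have hTyinj : Function.Injective (fun m : Fin d → ℤ => T m - y) := by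
    intro m m' hmm
    simp only at hmm
    apply hTinj
    linarith [hmm]
  have hry : ρa (Set.range fun m : Fin d → ℤ => T m - y) = 1 := by
    refine le_antisymm prob_le_one ?_
    calc (1 : ENNReal) = ρa {x | x + y ∈ C} := hy.symm
      _ ≤ _ := measure_mono (by
          rintro x hx
          obtain ⟨m, hm⟩ := hx
          exact ⟨m, by simp only; linarith [hm]⟩)
  obtain ⟨m₀, hm₀⟩ : ∃ m₀ : Fin d → ℤ, ρa {T m₀ - y} ≠ 0 := by
    by_contra hall
    push_neg at hall
    have h0 : ρa (Set.range fun m : Fin d → ℤ => T m - y) = 0 := by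
      rw [CW.measure_range ρa hTyinj]
      exact ENNReal.tsum_eq_zero.mpr hall
    rw [hry] at h0
    exact one_ne_zero h0
  set x₀ : ℝ := T m₀ - y with hx₀def
  have hx₀pos : ρa {x₀} ≠ 0 := hm₀
  have hpowpos : convPow ρa (nn + 1) {(nn + 1) • x₀} ≠ 0 := by
    have hge := CW.convPow_singleton_ge haddR ρa x₀ (nn + 1)
    intro hzero
    rw [hzero] at hge
    have hz : ρa {x₀} ^ (nn + 1) = 0 := le_antisymm hge (zero_le)
    exact hx₀pos (pow_eq_zero_iff (Nat.succ_ne_zero nn) |>.mp hz)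
  have hC1 : convPow ρa (nn + 1) C = 1 := by rw [← hνeq]; exact hνC
  haveI hpowa1 : IsProbabilityMeasure (convPow ρa (nn + 1)) := CW.convPow_prob haddR ρa (nn + 1)
  have hnx₀C : (nn + 1) • x₀ ∈ C := by
    by_contra hnot
    have hdis : Disjoint C {(nn + 1) • x₀} := by
      rw [Set.disjoint_singleton_right]
      exact hnot
    have h2 : convPow ρa (nn + 1) (C ∪ {(nn + 1) • x₀})
        = 1 + convPow ρa (nn + 1) {(nn + 1) • x₀} := by
      rw [measure_union hdis (measurableSet_singleton _), hC1]
    have h3 : convPow ρa (nn + 1) (C ∪ {(nn + 1) • x₀}) ≤ 1 := prob_le_one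
    rw [h2] at h3
    exact absurd h3 (not_le.mpr (ENNReal.lt_add_right ENNReal.one_ne_top hpowpos))
  obtain ⟨k, hk⟩ : ∃ k : Fin d → ℤ, T k = (nn + 1) • x₀ := hnx₀C
  have hxTinj : Function.Injective (fun m : Fin d → ℤ => x₀ + T m) := by
    intro m m' hmm
    simp only at hmm
    exact hTinj (add_left_cancel hmm)
  have hconc : ρa (Set.range fun m : Fin d → ℤ => x₀ + T m) = 1 := by
    refine le_antisymm prob_le_one ?_
    calc (1 : ENNReal) = ρa {x | x + y ∈ C} := hy.symm
      _ ≤ _ := measure_mono (by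
          rintro x hx
          obtain ⟨m, hm⟩ := hx
          refine ⟨m - m₀, ?_⟩
          simp only
          rw [hTsub m m₀, hx₀def]
          linarith [hm])
  set v₀ : Fin d → ℝ := ((nn : ℝ) + 1)⁻¹ • intCast k with hv₀def
  have hnn1 : ((nn : ℝ) + 1) ≠ 0 := by positivity
  have hLv₀ : L v₀ = x₀ := by
    have h1 : L v₀ = ((nn : ℝ) + 1)⁻¹ * T k := by
      show (∑ j : Fin d, a j * v₀ j) = _
      rw [hTdef]
      simp only [hv₀def, Pi.smul_apply, smul_eq_mul]
      rw [Finset.mul_sum]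
      refine Finset.sum_congr rfl fun j _ => ?_
      show a j * (((nn : ℝ) + 1)⁻¹ * (k j : ℝ)) = _
      ring
    rw [h1, hk]
    have h2 : ((nn + 1) • x₀ : ℝ) = ((nn : ℝ) + 1) * x₀ := by
      rw [nsmul_eq_mul]
      push_cast
      ring
    rw [h2]
    field_simp
  set w : (Fin d → ℤ) → ENNReal := fun m => ρa {x₀ + T m} with hwdef
  set ρ : Measure (Fin d → ℝ) :=
    Measure.sum (fun m : Fin d → ℤ => w m • Measure.dirac (v₀ + intCast m)) with hρdef
  have hvinj : Function.Injective (fun m : Fin d → ℤ => v₀ + intCast m) := by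
    intro m m' hmm
    simp only at hmm
    exact hintinj (add_left_cancel hmm)
  have hwsum : ∑' m : Fin d → ℤ, w m = 1 := by
    rw [← CW.measure_range ρa hxTinj]
    exact hconc
  have hρap : ∀ B : Set (Fin d → ℝ), MeasurableSet B →
      ρ B = ∑' m : Fin d → ℤ, w m * B.indicator 1 (v₀ + intCast m) := by
    intro B hB
    rw [hρdef, Measure.sum_apply _ hB]
    refine tsum_congr fun m => ?_
    rw [Measure.smul_apply, Measure.dirac_apply' _ hB, smul_eq_mul]
  have hρuniv : ρ Set.univ = 1 := by
    rw [hρap _ MeasurableSet.univ]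
    simp only [Set.indicator_univ, Pi.one_apply, mul_one]
    exact hwsum
  haveI hρprob : IsProbabilityMeasure ρ := ⟨hρuniv⟩
  have hLvm : ∀ m : Fin d → ℤ, L (v₀ + intCast m) = x₀ + T m := by
    intro m
    rw [hLadd, hLv₀, hLT]
  have hρrange : ρ (Set.range fun m : Fin d → ℤ => v₀ + intCast m) = 1 := by
    rw [hρap _ (Set.countable_range _).measurableSet]
    have hind : ∀ m : Fin d → ℤ,
        (Set.range fun m' : Fin d → ℤ => v₀ + intCast m').indicator
          (1 : (Fin d → ℝ) → ENNReal) (v₀ + intCast m) = 1 :=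
      fun m => by rw [Set.indicator_of_mem (Set.mem_range_self m)]; rfl
    rw [tsum_congr (fun m => by rw [hind m, mul_one])]
    exact hwsum
  have hρsing : ∀ m : Fin d → ℤ, ρ {v₀ + intCast m} = w m := by
    intro m
    rw [hρap _ (measurableSet_singleton _)]
    rw [tsum_eq_single m ?_]
    · rw [Set.indicator_of_mem (Set.mem_singleton _) 1, Pi.one_apply, mul_one]
    · intro m' hm'
      rw [Set.indicator_of_notMem ?_ 1, mul_zero]
      intro hcon
      exact hm' (hvinj hcon)
  haveI : IsProbabilityMeasure (ρ.map L) := Measure.isProbabilityMeasure_map hL.aemeasurable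
  have hmaprho : ρ.map L = ρa := by
    refine CW.ext_of_singletons hxTinj ?_ ?_ ?_
    · rw [measure_univ]
      refine le_antisymm prob_le_one ?_
      rw [Measure.map_apply hL (Set.countable_range _).measurableSet]
      calc (1 : ENNReal) = ρ (Set.range fun m : Fin d → ℤ => v₀ + intCast m) := hρrange.symm
        _ ≤ _ := measure_mono (by
            rintro xx ⟨m, rfl⟩
            exact ⟨m, (hLvm m).symm⟩)
    · rw [measure_univ]
      exact hconc
    · intro m
      rw [Measure.map_apply hL (measurableSet_singleton _)]
      rw [CW.measure_eq_inter (Set.countable_range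
          (fun m' : Fin d → ℤ => v₀ + intCast m')).measurableSet
          (by rw [hρrange, measure_univ]) (L ⁻¹' {x₀ + T m})]
      have hseteq : (L ⁻¹' {x₀ + T m}) ∩ Set.range (fun m' : Fin d → ℤ => v₀ + intCast m')
          = {v₀ + intCast m} := by
        ext xx
        simp only [Set.mem_inter_iff, Set.mem_preimage, Set.mem_singleton_iff, Set.mem_range]
        constructor
        · rintro ⟨hpre, m', rfl⟩
          rw [hLvm m'] at hpre
          rw [hTinj (add_left_cancel hpre)]
        · rintro rfl
          exact ⟨hLvm m, ⟨m, rfl⟩⟩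
      rw [hseteq, hρsing m]
  have hconcPow : ∀ i : ℕ,
      convPow ρ i (Set.range fun m : Fin d → ℤ => (i • v₀) + intCast m) = 1 := by
    intro i
    induction i with
    | zero =>
        show Measure.dirac 0 _ = 1
        rw [Measure.dirac_apply' _ (Set.countable_range _).measurableSet]
        have hmem : (0 : Fin d → ℝ) ∈
            Set.range (fun m : Fin d → ℤ => ((0 : ℕ) • v₀) + intCast m) := by
          refine ⟨0, ?_⟩
          rw [zero_nsmul]
          funext j
          show (0 : Fin d → ℝ) j + ((0 : Fin d → ℤ) j : ℝ) = (0 : Fin d → ℝ) j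
          simp
        rw [Set.indicator_of_mem hmem]
        rfl
    | succ i ih =>
        show mconv ρ (convPow ρ i) _ = 1
        haveI := CW.convPow_prob haddV ρ i
        refine CW.mconv_conc haddV ρ (convPow ρ i)
          (Set.countable_range _).measurableSet (Set.countable_range _).measurableSet
          (Set.countable_range _).measurableSet hρrange ih ?_
        rintro x ⟨m, rfl⟩ z ⟨m', rfl⟩
        refine ⟨m + m', ?_⟩
        show ((i + 1) • v₀) + intCast (m + m') = (v₀ + intCast m) + ((i • v₀) + intCast m')
        rw [hintadd, succ_nsmul' v₀ i]
        abel
  have hsmv : (nn + 1) • v₀ = intCast k := by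
    rw [hv₀def, ← Nat.cast_smul_eq_nsmul ℝ (nn + 1)]
    have : ((nn + 1 : ℕ) : ℝ) = (nn : ℝ) + 1 := by push_cast; ring
    rw [this, smul_inv_smul₀ hnn1]
  have hrangeS : (Set.range fun m : Fin d → ℤ => ((nn + 1) • v₀) + intCast m) = S := by
    ext xx
    simp only [Set.mem_range, hsmv, hSdef]
    constructor
    · rintro ⟨m, rfl⟩
      exact ⟨k + m, hintadd k m⟩
    · rintro ⟨m, rfl⟩
      refine ⟨m - k, ?_⟩
      rw [← hintadd]
      congr 1
      ring
  have hpowS : convPow ρ (nn + 1) S = 1 := by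
    rw [← hrangeS]
    exact hconcPow (nn + 1)
  refine ⟨ρ, hρprob, ?_⟩
  haveI hpow' : IsProbabilityMeasure (convPow ρ (nn + 1)) := CW.convPow_prob haddV ρ (nn + 1)
  have hmapeq : μ.map L = (convPow ρ (nn + 1)).map L := by
    rw [CW.map_convPow haddV haddR hL hLadd hL0 ρ (nn + 1), hmaprho, hνeq]
  refine CW.ext_of_singletons hintinj ?_ ?_ ?_
  · rw [measure_univ]; exact hμS
  · rw [measure_univ]; exact hpowS
  · intro m
    have hgen : ∀ κ : Measure (Fin d → ℝ), IsProbabilityMeasure κ → κ S = 1 →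
        κ {intCast m} = κ.map L {T m} := by
      intro κ hκ hκS
      rw [Measure.map_apply hL (measurableSet_singleton _)]
      rw [CW.measure_eq_inter hSm (by rw [hκS, measure_univ]) (L ⁻¹' {T m})]
      congr 1
      ext xx
      simp only [Set.mem_inter_iff, Set.mem_preimage, Set.mem_singleton_iff, hSdef,
        Set.mem_range]
      constructor
      · rintro rfl
        exact ⟨hLT m, ⟨m, rfl⟩⟩
      · rintro ⟨hpre, m', rfl⟩
        rw [hLT m'] at hpre
        rw [hTinj hpre]
    rw [hgen μ hμprob hμS, hgen _ hpow' hpowS, hmapeq]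
end

section
/- Let X be a ℤ^d-valued random vector. Suppose the characteristic function of X has no zeroes on ℝ^d, and there exists a = (a_1,…,a_d) ∈ ℝ^d with a_1,…,a_d linearly independent over ℚ such that a^T X is infinitely divisible. Then the distribution of X is infinitely divisible. -/
open MeasureTheory Complex Real Filter Topology

noncomputable section AuxForStmt11

open ENNReal

namespace AuxStmt11

lemma mconv_isProb {V : Type*} [MeasurableSpace V] [AddMonoid V] [MeasurableAdd₂ V]
    (μ ν : Measure V) [IsProbabilityMeasure μ] [IsProbabilityMeasure ν] :
    IsProbabilityMeasure (mconv μ ν) :=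
  Measure.isProbabilityMeasure_map (measurable_fst.add measurable_snd).aemeasurable

lemma convPow_isProb {V : Type*} [MeasurableSpace V] [AddMonoid V] [MeasurableAdd₂ V]
    (μ : Measure V) [IsProbabilityMeasure μ] (n : ℕ) :
    IsProbabilityMeasure (convPow μ n) := by
  induction n with
  | zero => exact Measure.dirac.isProbabilityMeasure
  | succ k ih => exact @mconv_isProb _ _ _ _ μ _ _ ih

lemma mconv_conc {V : Type*} [MeasurableSpace V] [AddMonoid V] [MeasurableAdd₂ V]
    {μ ν : Measure V} [IsProbabilityMeasure μ] [IsProbabilityMeasure ν]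
    {A B C : Set V} (hC : MeasurableSet C)
    (hμ : μ A = 1) (hν : ν B = 1) (hsum : ∀ x ∈ A, ∀ y ∈ B, x + y ∈ C) :
    mconv μ ν C = 1 := by
  have h1 : IsProbabilityMeasure (mconv μ ν) := mconv_isProb μ ν
  refine le_antisymm prob_le_one ?_
  rw [mconv, Measure.map_apply (f := fun p : V × V => p.1 + p.2) (measurable_fst.add measurable_snd) hC]
  calc (1 : ℝ≥0∞) = μ A * ν B := by rw [hμ, hν, one_mul]
    _ = (μ.prod ν) (A ×ˢ B) := (Measure.prod_prod A B).symm
    _ ≤ _ := measure_mono (fun p hp => hsum p.1 hp.1 p.2 hp.2)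

lemma mconv_map {V W : Type*} [MeasurableSpace V] [AddMonoid V] [MeasurableAdd₂ V]
    [MeasurableSpace W] [AddMonoid W] [MeasurableAdd₂ W]
    (μ ν : Measure V) [IsProbabilityMeasure μ] [IsProbabilityMeasure ν]
    (L : V → W) (hL : Measurable L) (hadd : ∀ x y, L (x + y) = L x + L y) :
    (mconv μ ν).map L = mconv (μ.map L) (ν.map L) := by
  rw [mconv, mconv, Measure.map_map (f := fun p : V × V => p.1 + p.2) hL (measurable_fst.add measurable_snd),
    Measure.map_prod_map _ _ hL hL,
    Measure.map_map (g := fun p : W × W => p.1 + p.2) (measurable_fst.add measurable_snd) (hL.prodMap hL)]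
  congr 1
  funext p
  exact (hadd p.1 p.2)

lemma convPow_map {V W : Type*} [MeasurableSpace V] [AddMonoid V] [MeasurableAdd₂ V]
    [MeasurableSpace W] [AddMonoid W] [MeasurableAdd₂ W]
    (μ : Measure V) [IsProbabilityMeasure μ]
    (L : V → W) (hL : Measurable L) (hadd : ∀ x y, L (x + y) = L x + L y)
    (h0 : L 0 = 0) (n : ℕ) :
    (convPow μ n).map L = convPow (μ.map L) n := by
  induction n with
  | zero =>
      show (Measure.dirac 0).map L = Measure.dirac 0
      rw [Measure.map_dirac' hL, h0]
  | succ k ih =>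
      have h1 : IsProbabilityMeasure (convPow μ k) := convPow_isProb μ k
      have h2 : IsProbabilityMeasure (μ.map L) := Measure.isProbabilityMeasure_map hL.aemeasurable
      calc (convPow μ (k+1)).map L = (mconv μ (convPow μ k)).map L := rfl
        _ = mconv (μ.map L) ((convPow μ k).map L) := mconv_map _ _ L hL hadd
        _ = mconv (μ.map L) (convPow (μ.map L) k) := by rw [ih]
        _ = convPow (μ.map L) (k+1) := rfl

lemma measurable_of_ne_const_countable {α β : Type*} [MeasurableSpace α]
    [MeasurableSingletonClass α] [MeasurableSpace β] {f : α → β} {b : β}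
    (h : {x | f x ≠ b}.Countable) : Measurable f := by
  intro B hB
  by_cases hbB : b ∈ B
  · have he : f ⁻¹' B = {x | f x ≠ b ∧ f x ∈ B} ∪ {x | f x = b} := by
      ext x; by_cases hx : f x = b <;> simp [hx, hbB]
    rw [he]
    have hc : {x | f x = b} = {x | f x ≠ b}ᶜ := by ext x; simp
    exact ((h.mono fun x hx => hx.1).measurableSet).union
      (hc ▸ h.measurableSet.compl)
  · exact (h.mono fun x hx => by
      rintro rfl; exact hbB hx).measurableSet

open Classical in
def pinv {ι γ : Type*} [Inhabited γ] (j : ι → ℝ) (t : ι → γ) : ℝ → γ :=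
  fun y => if hy : ∃ m, j m = y then t hy.choose else default

lemma pinv_apply {ι γ : Type*} [Inhabited γ] {j : ι → ℝ} (hj : Function.Injective j)
    (t : ι → γ) (m : ι) : pinv j t (j m) = t m := by
  have hy : ∃ m', j m' = j m := ⟨m, rfl⟩
  classical
  rw [pinv]
  simp only [dif_pos hy]
  exact congrArg t (hj hy.choose_spec)

lemma pinv_measurable {ι γ : Type*} [Countable ι] [Inhabited γ] [MeasurableSpace γ]
    (j : ι → ℝ) (t : ι → γ) : Measurable (pinv j t) := by
  by_cases hne : Nonempty ι
  · refine measurable_of_ne_const_countable (b := default) ?_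
    refine (Set.countable_range j).mono fun y hy => ?_
    by_contra hmem
    refine hy ?_
    classical
    rw [pinv]
    simp only [dif_neg (fun h : ∃ m, j m = y => hmem ⟨h.choose, h.choose_spec⟩)]
  · have : ∀ y, pinv j t y = default := fun y => by
      classical
      rw [pinv]
      simp only [dif_neg (fun h : ∃ m, j m = y => hne ⟨h.choose⟩)]
    simpa [funext this] using measurable_const (α := γ) (β := ℝ)

lemma exists_slice_one {α β : Type*} [MeasurableSpace α] [MeasurableSpace β]
    (μ : Measure α) (ν : Measure β) [IsProbabilityMeasure μ] [IsProbabilityMeasure ν]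
    {s : Set (α × β)} (hs : MeasurableSet s) (h1 : μ.prod ν s = 1) :
    ∃ y, μ ((fun x => (x, y)) ⁻¹' s) = 1 := by
  set f : β → ℝ≥0∞ := fun y => μ ((fun x => (x, y)) ⁻¹' s) with hf
  have hfm : Measurable f := measurable_measure_prodMk_right hs
  have hle : ∀ y, f y ≤ 1 := fun y => prob_le_one
  have hint : ∫⁻ y, f y ∂ν = 1 := by
    rw [← Measure.prod_apply_symm hs] at *; exact h1
  have hsub : ∫⁻ y, (1 - f y) ∂ν = 0 := by
    rw [lintegral_sub hfm (by rw [hint]; exact one_ne_top)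
      (Filter.Eventually.of_forall hle), hint, lintegral_one, measure_univ]
    simp
  have hae : ∀ᵐ y ∂ν, 1 - f y = 0 :=
    (lintegral_eq_zero_iff (measurable_const.sub hfm)).mp hsub
  have hae2 : ∀ᵐ y ∂ν, f y = 1 := by
    filter_upwards [hae] with y hy
    exact le_antisymm (hle y) (tsub_eq_zero_iff_le.mp hy)
  exact hae2.exists

end AuxStmt11

end AuxForStmt11

open AuxStmt11 ENNReal in
theorem stmt11 {d : ℕ} {Ω : Type*} [MeasurableSpace Ω] (P : Measure Ω) [IsProbabilityMeasure P]
    (X : Ω → Fin d → ℝ) (hX : Measurable X)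
    (hZd : ∀ ω, ∃ n : Fin d → ℤ, X ω = intCast n)
    (hnz : ∀ z : Fin d → ℝ, charFun (P.map X) z ≠ 0)
    (a : Fin d → ℝ)
    (hli : ∀ q : Fin d → ℚ, (∑ j, (q j : ℝ) * a j) = 0 → q = 0)
    (hIDa : InfDiv (P.map (fun ω => ∑ j, a j * X ω j))) :
    InfDiv (P.map X) := by
  classical
  intro n hn
  obtain ⟨k, rfl⟩ : ∃ k, n = k + 1 := ⟨n - 1, (Nat.succ_pred_eq_of_pos hn).symm⟩
  set μX := P.map X with hμX
  haveI : IsProbabilityMeasure μX := Measure.isProbabilityMeasure_map hX.aemeasurable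
  set L : (Fin d → ℝ) → ℝ := fun x => ∑ j, a j * x j with hL
  have hLm : Measurable L :=
    Finset.measurable_sum _ (fun j _ => by fun_prop)
  have hLadd : ∀ x y : Fin d → ℝ, L (x + y) = L x + L y := by
    intro x y
    simp only [hL, Pi.add_apply, mul_add, Finset.sum_add_distrib]
  have hL0 : L 0 = 0 := by simp [hL]
  set j₀ : (Fin d → ℤ) → ℝ := fun m => L (intCast m) with hj₀
  have hj₀val : ∀ m, j₀ m = ∑ j, a j * (m j : ℝ) := fun m => rfl
  have hj₀add : ∀ m m', j₀ (m + m') = j₀ m + j₀ m' := by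
    intro m m'
    simp only [hj₀val, Pi.add_apply, Int.cast_add, mul_add, Finset.sum_add_distrib]
  have hj₀zero : j₀ 0 = 0 := by simp [hj₀val]
  have hj₀sub : ∀ m m', j₀ (m - m') = j₀ m - j₀ m' := by
    intro m m'
    simp only [hj₀val, Pi.sub_apply, Int.cast_sub, mul_sub, Finset.sum_sub_distrib]
  have hj₀inj : Function.Injective j₀ := by
    intro m m' hmm
    have hq : (∑ j, (((fun j => (m j : ℚ) - (m' j : ℚ)) j : ℚ) : ℝ) * a j) = 0 := by
      push_cast
      simp only [sub_mul]
      rw [Finset.sum_sub_distrib]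
      simp only [hj₀val] at hmm
      rw [Finset.sum_congr rfl (fun j _ => mul_comm ((m j : ℝ)) (a j)),
        Finset.sum_congr rfl (fun j _ => mul_comm ((m' j : ℝ)) (a j))] at *
      rw [hmm, sub_self]
    have := hli _ hq
    funext j
    have hj := congrFun this j
    simp only [Pi.zero_apply, sub_eq_zero] at hj
    exact_mod_cast hj
  -- the lattice and its image
  set S : Set (Fin d → ℝ) := Set.range (intCast (d := d)) with hS
  have hScount : S.Countable := Set.countable_range _
  have hSmeas : MeasurableSet S := hScount.measurableSet
  have hμXS : μX S = 1 := by
    rw [hμX, Measure.map_apply hX hSmeas]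
    have : X ⁻¹' S = Set.univ := by
      ext ω
      simpa using ⟨(hZd ω).choose, (hZd ω).choose_spec.symm⟩
    rw [this, measure_univ]
  set G : Set ℝ := Set.range j₀ with hG
  have hGmeas : MeasurableSet G := (Set.countable_range _).measurableSet
  -- the infinitely divisible root of a·X
  have hYeq : P.map (fun ω => ∑ j, a j * X ω j) = μX.map L := by
    rw [hμX, Measure.map_map hLm hX]
    rfl
  obtain ⟨ρn, hρnP, hρn⟩ := hIDa (k + 1) hn
  rw [hYeq] at hρn
  haveI : IsProbabilityMeasure ρn := hρnP
  haveI hcpP : ∀ j : ℕ, IsProbabilityMeasure (convPow ρn j) := fun j => convPow_isProb ρn j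
  have hG1 : convPow ρn (k + 1) G = 1 := by
    rw [← hρn, Measure.map_apply hLm hGmeas]
    refine le_antisymm prob_le_one ?_
    rw [← hμXS]
    refine measure_mono ?_
    rintro x ⟨m, rfl⟩
    exact ⟨m, rfl⟩
  -- extract a coset on which ρn concentrates
  set E : Set (ℝ × ℝ) := (fun p : ℝ × ℝ => p.1 + p.2) ⁻¹' G with hE
  have hEmeas : MeasurableSet E := (measurable_fst.add measurable_snd) hGmeas
  have hprodE : (ρn.prod (convPow ρn k)) E = 1 := by
    have : convPow ρn (k + 1) = (ρn.prod (convPow ρn k)).map (fun p => p.1 + p.2) := rfl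
    rw [this, Measure.map_apply (f := fun p : ℝ × ℝ => p.1 + p.2) (measurable_fst.add measurable_snd) hGmeas] at hG1
    exact hG1
  obtain ⟨y₀, hy₀⟩ := exists_slice_one ρn (convPow ρn k) hEmeas hprodE
  set c : ℝ := -y₀ with hc
  set jc : (Fin d → ℤ) → ℝ := fun m => c + j₀ m with hjc
  have hjcinj : Function.Injective jc := fun m m' h =>
    hj₀inj (by simpa [hjc] using h)
  set Cc : Set ℝ := Set.range jc with hCc
  have hCcmeas : MeasurableSet Cc := (Set.countable_range _).measurableSet
  have hρnCc : ρn Cc = 1 := by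
    have hset : Cc = (fun x => (x, y₀)) ⁻¹' E := by
      ext x
      constructor
      · rintro ⟨m, rfl⟩
        refine ⟨m, ?_⟩
        show j₀ m = jc m + y₀
        simp only [hjc, hc]
        ring
      · rintro ⟨m, hm⟩
        have hm' : j₀ m = x + y₀ := hm
        refine ⟨m, ?_⟩
        show jc m = x
        simp only [hjc, hc]
        linarith
    rw [hset]
    exact hy₀
  -- the coset of the j-fold convolution power
  have hCk : ∀ j : ℕ, convPow ρn j (Set.range (fun m => (j : ℝ) * c + j₀ m)) = 1 := by
    intro j
    induction j with
    | zero =>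
        refine Measure.dirac_apply_of_mem ?_
        exact ⟨0, by simp [hj₀zero]⟩
    | succ j' ih =>
        refine mconv_conc ((Set.countable_range _).measurableSet) hρnCc ih ?_
        rintro x ⟨m, rfl⟩ y ⟨m', rfl⟩
        refine ⟨m + m', ?_⟩
        simp only [hjc, hj₀add]
        push_cast
        ring
  -- nc lies in G
  have hcompl : convPow ρn (k + 1) (Set.range fun m => (((k+1:ℕ) : ℝ)) * c + j₀ m)ᶜ = 0 := by
    have h := hCk (k + 1)
    rw [measure_compl ((Set.countable_range _).measurableSet) (measure_ne_top _ _), h]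
    simp
  obtain ⟨z, ⟨m₁, hm₁⟩, hz2⟩ : ∃ z, z ∈ G ∧ z ∈ Set.range fun m => (((k+1:ℕ) : ℝ)) * c + j₀ m := by
    by_contra hno
    push_neg at hno
    have hsub : G ⊆ (Set.range fun m => (((k+1:ℕ) : ℝ)) * c + j₀ m)ᶜ := fun z hz => hno z hz
    have := measure_mono (μ := convPow ρn (k + 1)) hsub
    rw [hG1, hcompl] at this
    simp at this
  obtain ⟨m₂, hm₂⟩ := hz2
  have hm₂' : ((k+1:ℕ) : ℝ) * c + j₀ m₂ = z := hm₂
  set m₀ : Fin d → ℤ := m₁ - m₂ with hm₀def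
  have hm₀ : j₀ m₀ = ((k+1:ℕ) : ℝ) * c := by
    rw [hm₀def, hj₀sub, hm₁]
    linarith
  have hNne : ((k+1:ℕ) : ℝ) ≠ 0 := Nat.cast_ne_zero.mpr (Nat.succ_ne_zero k)
  set x₀ : Fin d → ℝ := fun j => (m₀ j : ℝ) / ((k+1:ℕ) : ℝ) with hx₀
  have hx₀mul : ∀ jj, ((k+1:ℕ) : ℝ) * x₀ jj = (m₀ jj : ℝ) := by
    intro jj
    simp only [hx₀]
    field_simp
  have hLx₀ : L x₀ = c := by
    have h1 : L x₀ = (∑ j, a j * (m₀ j : ℝ)) / ((k+1:ℕ) : ℝ) := by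
      show (∑ j, a j * x₀ j) = _
      rw [Finset.sum_div]
      refine Finset.sum_congr rfl fun j _ => ?_
      simp only [hx₀]
      ring
    rw [h1, ← hj₀val, hm₀, mul_comm, mul_div_assoc, div_self hNne, mul_one]
  -- construct the candidate root measure on ℝ^d
  set h : ℝ → (Fin d → ℝ) := pinv jc (fun m => x₀ + intCast m) with hh
  have hhm : Measurable h := pinv_measurable _ _
  set ρ : Measure (Fin d → ℝ) := ρn.map h with hρ
  haveI hρP : IsProbabilityMeasure ρ := Measure.isProbabilityMeasure_map hhm.aemeasurable
  haveI hcpρ : ∀ j : ℕ, IsProbabilityMeasure (convPow ρ j) := fun j => convPow_isProb ρ j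
  have hLh : ∀ m, L (h (jc m)) = jc m := by
    intro m
    rw [hh, pinv_apply hjcinj]
    rw [hLadd, hLx₀]
  have haeLh : (fun y => L (h y)) =ᵐ[ρn] id := by
    rw [Filter.eventuallyEq_iff_exists_mem]
    refine ⟨Cc, ?_, ?_⟩
    · rw [mem_ae_iff, measure_compl hCcmeas (measure_ne_top _ _), hρnCc]
      simp
    · rintro y ⟨m, rfl⟩
      exact hLh m
  have hρL : ρ.map L = ρn := by
    rw [hρ, Measure.map_map hLm hhm]
    have : (L ∘ h) =ᵐ[ρn] id := haeLh
    rw [Measure.map_congr this, Measure.map_id]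
  have hconvρ : (convPow ρ (k + 1)).map L = convPow ρn (k + 1) := by
    rw [convPow_map ρ L hLm hLadd hL0, hρL]
  -- concentration of ρ and its powers
  have hρSx : ρ (Set.range (fun m : Fin d → ℤ => x₀ + intCast m)) = 1 := by
    rw [hρ, Measure.map_apply hhm ((Set.countable_range _).measurableSet)]
    refine le_antisymm prob_le_one ?_
    rw [← hρnCc]
    refine measure_mono ?_
    rintro y ⟨m, rfl⟩
    exact ⟨m, by rw [hh, pinv_apply hjcinj]⟩
  have hDk : ∀ j : ℕ, convPow ρ j
      (Set.range (fun m : Fin d → ℤ => (fun jj => (j : ℝ) * x₀ jj + (m jj : ℝ)))) = 1 := by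
    intro j
    induction j with
    | zero =>
        refine Measure.dirac_apply_of_mem ?_
        exact ⟨0, by funext jj; simp⟩
    | succ j' ih =>
        refine mconv_conc ((Set.countable_range _).measurableSet) hρSx ih ?_
        rintro x ⟨m, rfl⟩ y ⟨m', rfl⟩
        refine ⟨m + m', ?_⟩
        funext jj
        simp only [Pi.add_apply, intCast, Int.cast_add]
        push_cast
        ring
  have hν₁S : convPow ρ (k + 1) S = 1 := by
    refine le_antisymm prob_le_one ?_
    rw [← hDk (k + 1)]
    refine measure_mono ?_
    rintro x ⟨m, rfl⟩
    refine ⟨m₀ + m, ?_⟩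
    funext jj
    simp only [intCast, Pi.add_apply, Int.cast_add]
    rw [← hx₀mul jj]
  -- identification via the injective map L on the lattice
  set h' : ℝ → (Fin d → ℝ) := pinv j₀ intCast with hh'
  have hh'm : Measurable h' := pinv_measurable _ _
  have key : ∀ (ν : Measure (Fin d → ℝ)), IsProbabilityMeasure ν → ν S = 1 →
      (ν.map L).map h' = ν := by
    intro ν hνP hνS
    rw [Measure.map_map hh'm hLm]
    have hae' : (h' ∘ L) =ᵐ[ν] id := by
      rw [Filter.eventuallyEq_iff_exists_mem]
      refine ⟨S, ?_, ?_⟩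
      · rw [mem_ae_iff, measure_compl hSmeas (measure_ne_top _ _), hνS]
        simp
      · rintro x ⟨m, rfl⟩
        show h' (L (intCast m)) = intCast m
        exact pinv_apply hj₀inj intCast m
    rw [Measure.map_congr hae', Measure.map_id]
  refine ⟨ρ, hρP, ?_⟩
  calc μX = (μX.map L).map h' := (key μX inferInstance hμXS).symm
    _ = ((convPow ρ (k + 1)).map L).map h' := by rw [hρn, hconvρ]
    _ = convPow ρ (k + 1) := key _ (convPow_isProb ρ (k + 1)) hν₁S
end

section
/- Let X be a ℤ^d-valued random vector and suppose there is a sequence (a(n))_{n∈ℕ} in ℝ^d \ {0} such that the closure of { a(n)/|a(n)| : n ∈ ℕ } in the unit sphere S^{d−1} has non-empty interior (relative topology of S^{d−1}), and a(n)^T X is infinitely divisible for each n. Then the characteristic function of X has no zero on ℝ^d. -/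
open MeasureTheory Complex Real Filter Topology

noncomputable section
namespace Stmt12Aux


/-- 1-d characteristic function -/
def cf1 (μ : Measure ℝ) (t : ℝ) : ℂ := ∫ x, Complex.exp (Complex.I * (t * x)) ∂μ

lemma norm_exp_I_mul (r : ℝ) : ‖Complex.exp (Complex.I * r)‖ = 1 := by
  rw [Complex.norm_exp]
  simp

lemma integrable_exp_I_mul (μ : Measure ℝ) [IsFiniteMeasure μ] (t : ℝ) :
    Integrable (fun x : ℝ => Complex.exp (Complex.I * (t * x))) μ := by
  have hc : Continuous (fun x : ℝ => Complex.exp (Complex.I * (t * x))) := by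
    continuity
  refine (integrable_const (1 : ℝ)).mono' hc.aestronglyMeasurable ?_
  filter_upwards with x
  rw [show ((t : ℂ) * x : ℂ) = ((t * x : ℝ) : ℂ) by push_cast; ring, norm_exp_I_mul]

lemma norm_cf1_le_one (μ : Measure ℝ) [IsProbabilityMeasure μ] (t : ℝ) : ‖cf1 μ t‖ ≤ 1 := by
  calc ‖cf1 μ t‖ ≤ ∫ x, ‖Complex.exp (Complex.I * (t * x))‖ ∂μ := norm_integral_le_integral_norm _
  _ ≤ 1 := by
      have : ∀ x : ℝ, ‖Complex.exp (Complex.I * (t * x))‖ = 1 := by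
        intro x
        rw [show ((t : ℂ) * x : ℂ) = ((t * x : ℝ) : ℂ) by push_cast; ring, norm_exp_I_mul]
      simp [this]

lemma cf1_mconv (μ ν : Measure ℝ) [IsProbabilityMeasure μ] [IsProbabilityMeasure ν] (t : ℝ) :
    cf1 (mconv μ ν) t = cf1 μ t * cf1 ν t := by
  unfold cf1 mconv
  have hm : Measurable (fun p : ℝ × ℝ => p.1 + p.2) := by fun_prop
  have hc : Continuous (fun x : ℝ => Complex.exp (Complex.I * (t * x))) := by continuity
  rw [integral_map hm.aemeasurable hc.aestronglyMeasurable]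
  have key : (fun p : ℝ × ℝ => Complex.exp (Complex.I * ((t : ℂ) * ((p.1 + p.2 : ℝ) : ℂ))))
      = fun p : ℝ × ℝ => Complex.exp (Complex.I * (t * p.1)) * Complex.exp (Complex.I * (t * p.2)) := by
    funext p
    rw [← Complex.exp_add]
    congr 1
    push_cast
    ring
  rw [show (∫ p : ℝ × ℝ, Complex.exp (Complex.I * ((t : ℂ) * ((p.1 + p.2 : ℝ) : ℂ))) ∂μ.prod ν)
      = ∫ p : ℝ × ℝ, Complex.exp (Complex.I * (t * p.1)) * Complex.exp (Complex.I * (t * p.2)) ∂μ.prod ν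
    from by rw [key]]
  exact integral_prod_mul (μ := μ) (ν := ν) (L := ℂ) (fun x => Complex.exp (Complex.I * (t * x))) (fun y => Complex.exp (Complex.I * (t * y)))

instance mconv_prob (μ ν : Measure ℝ) [IsProbabilityMeasure μ] [IsProbabilityMeasure ν] :
    IsProbabilityMeasure (mconv μ ν) := by
  unfold mconv
  exact Measure.isProbabilityMeasure_map (by fun_prop)

lemma convPow_prob (μ : Measure ℝ) [IsProbabilityMeasure μ] (n : ℕ) :
    IsProbabilityMeasure (convPow μ n) := by
  induction n with
  | zero => unfold convPow; infer_instance
  | succ n ih => unfold convPow; exact mconv_prob μ (convPow μ n)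

lemma cf1_convPow (μ : Measure ℝ) [IsProbabilityMeasure μ] (n : ℕ) (t : ℝ) :
    cf1 (convPow μ n) t = (cf1 μ t) ^ n := by
  induction n with
  | zero =>
      unfold convPow cf1
      simp [integral_dirac]
  | succ n ih =>
      have := convPow_prob μ n
      unfold convPow
      rw [cf1_mconv μ (convPow μ n) t, ih, pow_succ]
      ring


lemma norm_exp_I_mul' (r : ℂ) (hr : r.re = 0) : ‖Complex.exp r‖ = 1 := by
  rw [Complex.norm_exp, hr, Real.exp_zero]

lemma integrable_exp_I_comp {α : Type*} [MeasurableSpace α] (μ : Measure α) [IsFiniteMeasure μ]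
    {g : α → ℝ} (hg : Measurable g) :
    Integrable (fun x => Complex.exp (Complex.I * (g x : ℂ))) μ := by
  have hm : Measurable (fun x => Complex.exp (Complex.I * (g x : ℂ))) := by
    exact (Complex.measurable_exp.comp (by fun_prop))
  refine (integrable_const (1 : ℝ)).mono' hm.aestronglyMeasurable ?_
  filter_upwards with x
  rw [norm_exp_I_mul' _ (by simp)]

lemma integrable_cos_comp {α : Type*} [MeasurableSpace α] (μ : Measure α) [IsFiniteMeasure μ]
    {g : α → ℝ} (hg : Measurable g) :
    Integrable (fun x => Real.cos (g x)) μ := by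
  refine (integrable_const (1 : ℝ)).mono' (Real.measurable_cos.comp hg).aestronglyMeasurable ?_
  filter_upwards with x
  simpa using Real.abs_cos_le_one (g x)

lemma sq_norm_cf1 (μ : Measure ℝ) [IsProbabilityMeasure μ] (t : ℝ) :
    ‖cf1 μ t‖ ^ 2 = ∫ p, Real.cos (t * (p.1 - p.2)) ∂(μ.prod μ) := by
  have h1 : ((‖cf1 μ t‖ ^ 2 : ℝ) : ℂ) = cf1 μ t * (starRingEnd ℂ) (cf1 μ t) := by
    rw [Complex.mul_conj, Complex.normSq_eq_norm_sq]
  have h2 : (starRingEnd ℂ) (cf1 μ t) = ∫ x, Complex.exp (Complex.I * ((-t : ℝ) * x)) ∂μ := by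
    rw [cf1, ← integral_conj]
    congr 1
    funext x
    rw [← Complex.exp_conj]
    congr 1
    simp
  have h3 : cf1 μ t * (starRingEnd ℂ) (cf1 μ t)
      = ∫ p, Complex.exp (Complex.I * ((t * (p.1 - p.2) : ℝ) : ℂ)) ∂(μ.prod μ) := by
    rw [h2, cf1,
      ← integral_prod_mul (μ := μ) (ν := μ) (L := ℂ) (fun x => Complex.exp (Complex.I * (t * x)))
        (fun y => Complex.exp (Complex.I * ((-t : ℝ) * y)))]
    congr 1
    funext p
    rw [← Complex.exp_add]
    congr 1
    push_cast
    ring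
  have h4 : ∫ p, Complex.exp (Complex.I * ((t * (p.1 - p.2) : ℝ) : ℂ)) ∂(μ.prod μ)
      = ((∫ p, Real.cos (t * (p.1 - p.2)) ∂(μ.prod μ) : ℝ) : ℂ) := by
    have hic : Integrable (fun p : ℝ × ℝ => ((Real.cos (t * (p.1 - p.2)) : ℝ) : ℂ)) (μ.prod μ) :=
      (integrable_cos_comp _ (by fun_prop)).ofReal
    have hisr : Integrable (fun p : ℝ × ℝ => Real.sin (t * (p.1 - p.2))) (μ.prod μ) := by
      refine (integrable_const (1 : ℝ)).mono'
        ((Real.measurable_sin.comp (by fun_prop)).aestronglyMeasurable) ?_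
      filter_upwards with p
      simpa using Real.abs_sin_le_one (t * (p.1 - p.2))
    have his : Integrable (fun p : ℝ × ℝ => ((Real.sin (t * (p.1 - p.2)) : ℝ) : ℂ) * Complex.I)
        (μ.prod μ) := hisr.ofReal.mul_const _
    have key : (fun p : ℝ × ℝ => Complex.exp (Complex.I * ((t * (p.1 - p.2) : ℝ) : ℂ)))
        = fun p : ℝ × ℝ => ((Real.cos (t * (p.1 - p.2)) : ℝ) : ℂ)
            + ((Real.sin (t * (p.1 - p.2)) : ℝ) : ℂ) * Complex.I := by
      funext p
      rw [mul_comm, Complex.exp_mul_I, ← Complex.ofReal_cos, ← Complex.ofReal_sin]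
    have hcoe : ∀ (g : ℝ × ℝ → ℝ), (∫ p, ((g p : ℝ) : ℂ) ∂(μ.prod μ)) = ((∫ p, g p ∂(μ.prod μ) : ℝ) : ℂ) := by
      intro g
      exact integral_ofReal (𝕜 := ℂ)
    rw [key, integral_add hic his, integral_mul_const, hcoe, hcoe]
    have hodd : ∫ p, Real.sin (t * (p.1 - p.2)) ∂(μ.prod μ) = 0 := by
      have hswap : ∫ p, Real.sin (t * (p.1 - p.2)) ∂(μ.prod μ)
          = ∫ p, Real.sin (t * (p.2 - p.1)) ∂(μ.prod μ) := by
        rw [← integral_prod_swap]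
        rfl
      have hneg : ∀ p : ℝ × ℝ, Real.sin (t * (p.2 - p.1)) = - Real.sin (t * (p.1 - p.2)) := by
        intro p
        rw [← Real.sin_neg]
        ring_nf
      simp_rw [hneg] at hswap
      rw [integral_neg] at hswap
      linarith
    rw [hodd]
    simp
  have := h1.trans (h3.trans h4)
  exact_mod_cast this

lemma cf1_doubling_sq (μ : Measure ℝ) [IsProbabilityMeasure μ] (t : ℝ) :
    1 - ‖cf1 μ (2 * t)‖ ^ 2 ≤ 4 * (1 - ‖cf1 μ t‖ ^ 2) := by
  rw [sq_norm_cf1, sq_norm_cf1]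
  have hint1 : Integrable (fun p : ℝ × ℝ => Real.cos (t * (p.1 - p.2))) (μ.prod μ) :=
    integrable_cos_comp _ (by fun_prop)
  have hint2 : Integrable (fun p : ℝ × ℝ => Real.cos (2 * t * (p.1 - p.2))) (μ.prod μ) :=
    integrable_cos_comp _ (by fun_prop)
  have hmono : ∫ p, (1 - Real.cos (2 * t * (p.1 - p.2))) ∂(μ.prod μ)
      ≤ ∫ p, 4 * (1 - Real.cos (t * (p.1 - p.2))) ∂(μ.prod μ) := by
    refine integral_mono ((integrable_const 1).sub hint2) (((integrable_const 1).sub hint1).const_mul 4) ?_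
    intro p
    have hc := Real.cos_two_mul (t * (p.1 - p.2))
    have h1 : Real.cos (2 * t * (p.1 - p.2)) = 2 * Real.cos (t * (p.1 - p.2)) ^ 2 - 1 := by
      rw [← hc]; ring_nf
    simp only [h1]
    nlinarith [Real.cos_le_one (t * (p.1 - p.2)), Real.neg_one_le_cos (t * (p.1 - p.2))]
  rw [integral_sub (integrable_const 1) hint2, integral_const_mul, integral_sub (integrable_const 1) hint1] at hmono
  simp only [integral_const, probReal_univ, smul_eq_mul, one_mul] at hmono
  linarith



lemma root_ineq {x y : ℝ} (hx0 : 0 ≤ x) (hy0 : 0 ≤ y)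
    (h : ∀ n : ℕ, 0 < n → ∃ a b : ℝ, 0 ≤ a ∧ a ≤ 1 ∧ 0 ≤ b ∧ b ≤ 1 ∧
      a ^ n = x ∧ b ^ n = y ∧ 1 - b ≤ 4 * (1 - a)) :
    x ^ 4 ≤ y := by
  rcases eq_or_lt_of_le hx0 with hx | hx
  · rw [← hx]
    simpa using hy0
  -- x > 0
  have ha_lb : ∀ n : ℕ, 0 < n → ∀ a : ℝ, 0 ≤ a → a ^ n = x → 1 + Real.log x / n ≤ a := by
    intro n hn a ha0 hax
    have ha0' : 0 < a := by
      rcases eq_or_lt_of_le ha0 with h0 | h0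
      · exfalso; rw [← h0] at hax; simp [zero_pow hn.ne'] at hax; exact hx.ne' hax.symm
      · exact h0
    have hla : Real.log x = n * Real.log a := by
      rw [← hax, Real.log_pow]
    have : a = Real.exp (Real.log x / n) := by
      rw [hla]
      field_simp
      rw [Real.exp_log ha0']
    rw [this]
    exact Real.add_one_le_exp _ |>.trans_eq' (by ring_nf)
  rcases eq_or_lt_of_le hy0 with hy | hy
  · -- y = 0 : contradiction
    exfalso
    obtain ⟨n, hn⟩ := exists_nat_gt (max 1 (-4 * Real.log x))
    have hn0 : 0 < n := by
      have h1 : (1:ℝ) < n := (le_max_left 1 (-4 * Real.log x)).trans_lt hn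
      exact_mod_cast (by linarith : (0:ℝ) < n)
    obtain ⟨a, b, ha0, ha1, hb0, hb1, hax, hby, hab⟩ := h n hn0
    have hb : b = 0 := by
      by_contra hb
      have : 0 < b := lt_of_le_of_ne hb0 (Ne.symm hb)
      have : 0 < b ^ n := pow_pos this n
      rw [hby, ← hy] at this
      exact lt_irrefl _ this
    rw [hb] at hab
    have h34 : a ≤ 3 / 4 := by linarith
    have hlog : -4 * Real.log x < n := (le_max_right 1 (-4 * Real.log x)).trans_lt hn
    have hnn : (0 : ℝ) < n := by exact_mod_cast hn0
    have : -(1 : ℝ) / 4 < Real.log x / n := by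
      rw [div_lt_div_iff₀ (by norm_num) hnn]
      linarith
    have := ha_lb n hn0 a ha0 hax
    linarith
  -- y > 0
  have key : -Real.log y ≤ 4 * (-Real.log x) := by
    by_contra hcon
    push_neg at hcon
    set S := -Real.log y with hS
    set L := -Real.log x with hL
    have hS0 : 0 < S - 4 * L := by linarith
    obtain ⟨n, hn⟩ := exists_nat_gt (max 1 (4 * L * S / (S - 4 * L)))
    have hn0 : 0 < n := by
      have h1 : (1:ℝ) < n := (le_max_left _ _).trans_lt hn
      exact_mod_cast (by linarith : (0:ℝ) < n)
    have hnn : (0 : ℝ) < n := by exact_mod_cast hn0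
    obtain ⟨a, b, ha0, ha1, hb0, hb1, hax, hby, hab⟩ := h n hn0
    have hb0' : 0 < b := by
      by_contra hb
      push_neg at hb
      have : b = 0 := le_antisymm hb hb0
      rw [this] at hby
      rw [zero_pow hn0.ne'] at hby
      exact hy.ne hby
    -- b ≤ 1/(1 - log y / n)
    have hlb : Real.log y = n * Real.log b := by rw [← hby, Real.log_pow]
    have hbexp : b = Real.exp (Real.log y / n) := by
      rw [hlb]; field_simp; rw [Real.exp_log hb0']
    have hSn : Real.log y / n = -(S / n) := by rw [hS]; ring
    have hS0' : 0 ≤ S := by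
      rw [hS]
      have : Real.log y ≤ 0 := Real.log_nonpos hy0 (by
        obtain ⟨a', b', _, _, hb0'', hb1'', _, hby', _⟩ := h 1 one_pos
        rw [pow_one] at hby'
        rw [← hby']; exact hb1'')
      linarith
    have hexp_le : b ≤ 1 / (1 + S / n) := by
      rw [hbexp, hSn]
      have h1 : 1 + S / n ≤ Real.exp (S / n) := Real.add_one_le_exp _ |>.trans_eq' (by ring)
      have h2 : 0 < 1 + S / n := by positivity
      rw [Real.exp_neg, le_div_iff₀ h2, inv_mul_eq_div, div_le_one (Real.exp_pos _)]
      exact h1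
    have h1mb : S / (n + S) ≤ 1 - b := by
      have h2 : 0 < 1 + S / n := by positivity
      have hden : 0 < (n:ℝ) + S := by linarith
      have heq : 1 - 1 / (1 + S / n) = S / (n + S) := by
        field_simp
        ring
      linarith [hexp_le]
    have h1ma : 1 - a ≤ L / n := by
      have h3 := ha_lb n hn0 a ha0 hax
      have h4 : L / (n:ℝ) = -(Real.log x / n) := by rw [hL]; ring
      rw [h4]
      linarith
    have hfin : S / (n + S) ≤ 4 * L / n := by
      calc S / (n + S) ≤ 1 - b := h1mb
        _ ≤ 4 * (1 - a) := hab
        _ ≤ 4 * (L / n) := by linarith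
        _ = 4 * L / n := by ring
    have hx1 : x ≤ 1 := by
      obtain ⟨a', b', ha0'', ha1'', _, _, hax', _, _⟩ := h 1 one_pos
      rw [pow_one] at hax'
      rw [← hax']; exact ha1''
    have hL0 : 0 ≤ L := by
      rw [hL]
      linarith [Real.log_nonpos hx0 hx1]
    have hden : 0 < n + S := by linarith
    rw [div_le_div_iff₀ hden hnn] at hfin
    -- S * n ≤ 4L(n+S) -> n (S - 4L) ≤ 4 L S
    have hfin2 : (n : ℝ) * (S - 4 * L) ≤ 4 * L * S := by nlinarith
    have hgt : 4 * L * S / (S - 4 * L) < n := (le_max_right _ _).trans_lt hn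
    rw [div_lt_iff₀ hS0] at hgt
    nlinarith
  -- conclude
  have hx4 : (0:ℝ) < x ^ 4 := pow_pos hx 4
  rw [← Real.log_le_log_iff hx4 hy, Real.log_pow]
  push_cast
  linarith



lemma enorm'_nonneg {d : ℕ} (x : Fin d → ℝ) : 0 ≤ enorm' x := Real.sqrt_nonneg _

lemma enorm'_eq_norm {d : ℕ} (x : Fin d → ℝ) :
    enorm' x = ‖(WithLp.equiv 2 (Fin d → ℝ)).symm x‖ := by
  rw [EuclideanSpace.norm_eq]
  unfold enorm'
  congr 1
  apply Finset.sum_congr rfl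
  intro j _
  rw [Real.norm_eq_abs, _root_.sq_abs]
  rfl

lemma enorm'_smul {d : ℕ} (c : ℝ) (x : Fin d → ℝ) : enorm' (c • x) = |c| * enorm' x := by
  unfold enorm'
  have : ∀ j, (c • x) j ^ 2 = c ^ 2 * x j ^ 2 := by intro j; simp [Pi.smul_apply]; ring
  simp_rw [this, ← Finset.mul_sum]
  rw [Real.sqrt_mul (by positivity), Real.sqrt_sq_eq_abs]

lemma enorm'_sub_comm {d : ℕ} (x y : Fin d → ℝ) : enorm' (x - y) = enorm' (y - x) := by
  have h : y - x = (-1 : ℝ) • (x - y) := by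
    funext j
    simp [Pi.smul_apply]
  rw [h, enorm'_smul]
  norm_num

lemma enorm'_triangle {d : ℕ} (x y : Fin d → ℝ) : enorm' (x + y) ≤ enorm' x + enorm' y := by
  rw [enorm'_eq_norm, enorm'_eq_norm, enorm'_eq_norm]
  exact norm_add_le _ _

lemma abs_sub_enorm' {d : ℕ} (x y : Fin d → ℝ) : |enorm' x - enorm' y| ≤ enorm' (x - y) := by
  rw [enorm'_eq_norm, enorm'_eq_norm, enorm'_eq_norm]
  exact abs_norm_sub_norm_le _ _

lemma abs_coord_le_enorm' {d : ℕ} (x : Fin d → ℝ) (j : Fin d) : |x j| ≤ enorm' x := by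
  rw [← Real.sqrt_sq_eq_abs]
  exact Real.sqrt_le_sqrt (Finset.single_le_sum (f := fun j => x j ^ 2)
    (fun i _ => sq_nonneg _) (Finset.mem_univ j))

lemma norm_le_enorm' {d : ℕ} (x : Fin d → ℝ) : ‖x‖ ≤ enorm' x := by
  rw [pi_norm_le_iff_of_nonneg (enorm'_nonneg x)]
  intro j
  rw [Real.norm_eq_abs]
  exact abs_coord_le_enorm' x j

lemma enorm'_pos {d : ℕ} {x : Fin d → ℝ} (hx : x ≠ 0) : 0 < enorm' x := by
  rcases lt_or_eq_of_le (enorm'_nonneg x) with h | h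
  · exact h
  · exfalso
    apply hx
    have hle : ∑ j, x j ^ 2 ≤ 0 := Real.sqrt_eq_zero'.mp h.symm
    have hge : 0 ≤ ∑ j, x j ^ 2 := Finset.sum_nonneg fun i _ => sq_nonneg _
    have hsum : ∑ j, x j ^ 2 = 0 := le_antisymm hle hge
    funext j
    have := Finset.sum_eq_zero_iff_of_nonneg (fun i (_ : i ∈ Finset.univ) => sq_nonneg (x i)) |>.mp hsum j (Finset.mem_univ j)
    exact pow_eq_zero_iff (by norm_num) |>.mp this

lemma enorm'_le_of_coords {d : ℕ} (x : Fin d → ℝ) (C : ℝ) (hC : 0 ≤ C)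
    (h : ∀ j, |x j| ≤ C) : enorm' x ≤ Real.sqrt d * C := by
  unfold enorm'
  have hsum : ∑ j, x j ^ 2 ≤ ∑ _j : Fin d, C ^ 2 := by
    apply Finset.sum_le_sum
    intro j _
    rw [← _root_.sq_abs]
    exact pow_le_pow_left₀ (abs_nonneg _) (h j) 2
  calc Real.sqrt (∑ j, x j ^ 2) ≤ Real.sqrt (d * C ^ 2) := by
        apply Real.sqrt_le_sqrt
        simpa using hsum
    _ = Real.sqrt d * C := by
        rw [Real.sqrt_mul (by positivity), Real.sqrt_sq hC]



def phi {d : ℕ} {Ω : Type*} [MeasurableSpace Ω] (P : Measure Ω) (X : Ω → Fin d → ℝ)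
    (z : Fin d → ℝ) : ℂ :=
  ∫ ω, Complex.exp (Complex.I * ((∑ j, z j * X ω j : ℝ) : ℂ)) ∂P

variable {d : ℕ} {Ω : Type*} [MeasurableSpace Ω] (P : Measure Ω) [IsProbabilityMeasure P]
  (X : Ω → Fin d → ℝ)

lemma meas_lin (hX : Measurable X) (c : Fin d → ℝ) : Measurable fun ω => ∑ j, c j * X ω j := by
  apply Finset.measurable_sum
  intro j _
  exact (measurable_const.mul ((measurable_pi_apply j).comp hX))

lemma char_eq_phi (hX : Measurable X) (z : Fin d → ℝ) :
    (∫ x, Complex.exp (Complex.I * (∑ j, z j * x j)) ∂(P.map X)) = phi P X z := by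
  have hc : Continuous fun x : Fin d → ℝ => Complex.exp (Complex.I * ((∑ j, z j * x j : ℝ) : ℂ)) := by
    apply Complex.continuous_exp.comp
    apply continuous_const.mul
    apply Complex.continuous_ofReal.comp
    apply continuous_finset_sum
    intro j _
    exact continuous_const.mul (continuous_apply j)
  rw [integral_map hX.aemeasurable hc.aestronglyMeasurable]
  rfl

lemma phi_zero : phi P X 0 = 1 := by
  unfold phi
  simp

lemma phi_cont (hX : Measurable X) : Continuous (phi P X) := by
  unfold phi
  apply continuous_of_dominated (bound := fun _ => (1 : ℝ))
  · intro z
    have : Measurable fun ω => Complex.exp (Complex.I * ((∑ j, z j * X ω j : ℝ) : ℂ)) := by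
      apply Complex.measurable_exp.comp
      apply Measurable.const_mul
      exact Complex.measurable_ofReal.comp (meas_lin X hX z)
    exact this.aestronglyMeasurable
  · intro z
    filter_upwards with ω
    rw [Complex.norm_exp]
    simp
  · exact integrable_const 1
  · filter_upwards with ω
    apply Complex.continuous_exp.comp
    apply continuous_const.mul
    apply Complex.continuous_ofReal.comp
    apply continuous_finset_sum
    intro j _
    exact (continuous_apply j).mul continuous_const

lemma phi_periodic (hZd : ∀ ω, ∃ n : Fin d → ℤ, X ω = intCast n) (z : Fin d → ℝ)
    (m : Fin d → ℤ) : phi P X (z + fun j => 2 * π * (m j : ℝ)) = phi P X z := by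
  unfold phi
  congr 1
  funext ω
  obtain ⟨n, hn⟩ := hZd ω
  have hXj : ∀ j, X ω j = (n j : ℝ) := by
    intro j
    rw [hn]
    rfl
  have hsum : (∑ j, (z + fun j => 2 * π * (m j : ℝ)) j * X ω j)
      = (∑ j, z j * X ω j) + 2 * π * ((∑ j, m j * n j : ℤ) : ℝ) := by
    simp_rw [Pi.add_apply, add_mul, Finset.sum_add_distrib]
    congr 1
    push_cast
    rw [Finset.mul_sum]
    apply Finset.sum_congr rfl
    intro j _
    rw [hXj j]
    ring
  rw [hsum]
  push_cast
  rw [mul_add, Complex.exp_add]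
  have h1 := Complex.exp_int_mul_two_pi_mul_I (∑ j, m j * n j)
  rw [show Complex.I * (2 * (π : ℂ) * ∑ x, (m x : ℂ) * (n x : ℂ))
      = ((∑ j, m j * n j : ℤ) : ℂ) * (2 * (π : ℂ) * Complex.I) from by push_cast; ring, h1, mul_one]


lemma infdiv_doubling (μ : Measure ℝ) [IsProbabilityMeasure μ] (h : InfDiv μ) (t : ℝ) :
    ‖cf1 μ t‖ ^ 4 ≤ ‖cf1 μ (2 * t)‖ := by
  have key : (‖cf1 μ t‖ ^ 2) ^ 4 ≤ ‖cf1 μ (2 * t)‖ ^ 2 := by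
    apply root_ineq (by positivity) (by positivity)
    intro n hn
    obtain ⟨ρ, hρ, hμ⟩ := h n hn
    haveI := hρ
    refine ⟨‖cf1 ρ t‖ ^ 2, ‖cf1 ρ (2 * t)‖ ^ 2, by positivity,
      pow_le_one₀ (norm_nonneg _) (norm_cf1_le_one ρ t), by positivity,
      pow_le_one₀ (norm_nonneg _) (norm_cf1_le_one ρ (2 * t)), ?_, ?_, cf1_doubling_sq ρ t⟩
    · rw [hμ, cf1_convPow, norm_pow]
      ring
    · rw [hμ, cf1_convPow, norm_pow]
      ring
  have h48 : (‖cf1 μ t‖ ^ 4) ^ 2 ≤ ‖cf1 μ (2 * t)‖ ^ 2 := by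
    calc (‖cf1 μ t‖ ^ 4) ^ 2 = (‖cf1 μ t‖ ^ 2) ^ 4 := by ring
      _ ≤ _ := key
  nlinarith [norm_nonneg (cf1 μ (2 * t)), pow_nonneg (norm_nonneg (cf1 μ t)) 4]

lemma cf1_lin {d : ℕ} {Ω : Type*} [MeasurableSpace Ω] (P : Measure Ω) [IsProbabilityMeasure P]
    (X : Ω → Fin d → ℝ) (hX : Measurable X) (c : Fin d → ℝ) (t : ℝ) :
    cf1 (P.map fun ω => ∑ j, c j * X ω j) t = phi P X (t • c) := by
  unfold cf1
  have hc : Continuous fun x : ℝ => Complex.exp (Complex.I * ((t : ℂ) * (x : ℂ))) := by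
    apply Complex.continuous_exp.comp
    exact continuous_const.mul (continuous_const.mul Complex.continuous_ofReal)
  rw [integral_map (meas_lin X hX c).aemeasurable hc.aestronglyMeasurable]
  unfold phi
  congr 1
  funext ω
  congr 1
  push_cast [Pi.smul_apply, smul_eq_mul]
  rw [Finset.mul_sum]
  congr 1
  apply Finset.sum_congr rfl
  intro j _
  ring

end Stmt12Aux
end

set_option maxHeartbeats 1000000 in
theorem stmt12 {d : ℕ} {Ω : Type*} [MeasurableSpace Ω] (P : Measure Ω) [IsProbabilityMeasure P]
    (X : Ω → Fin d → ℝ) (hX : Measurable X)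
    (hZd : ∀ ω, ∃ n : Fin d → ℤ, X ω = intCast n)
    (a : ℕ → Fin d → ℝ) (ha : ∀ n, a n ≠ 0)
    (hU : ∃ U : Set (Fin d → ℝ), IsOpen U ∧
      (U ∩ {x | enorm' x = 1}).Nonempty ∧
      U ∩ {x | enorm' x = 1} ⊆ closure {x | ∃ n : ℕ, x = (enorm' (a n))⁻¹ • a n})
    (hID : ∀ n : ℕ, InfDiv (P.map (fun ω => ∑ j, a n j * X ω j))) :
    ∀ z : Fin d → ℝ, charFun (P.map X) z ≠ 0 := by
  classical
  intro z
  obtain ⟨U, hUopen, ⟨w, hwU, hwS⟩, hsub⟩ := hU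
  set Dset := {x : Fin d → ℝ | ∃ n : ℕ, x = (enorm' (a n))⁻¹ • a n} with hDset
  have hchar := Stmt12Aux.char_eq_phi P X hX
  have hprob : ∀ c : Fin d → ℝ, IsProbabilityMeasure (P.map fun ω => ∑ j, c j * X ω j) :=
    fun c => Measure.isProbabilityMeasure_map (Stmt12Aux.meas_lin X hX c).aemeasurable
  -- doubling inequality along directions in Dset
  have hdoubD : ∀ v ∈ Dset, ∀ t : ℝ,
      ‖Stmt12Aux.phi P X (t • v)‖ ^ 4 ≤ ‖Stmt12Aux.phi P X ((2 * t) • v)‖ := by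
    rintro v ⟨n, rfl⟩ t
    set s := t * (enorm' (a n))⁻¹ with hs
    have h1 : t • (enorm' (a n))⁻¹ • a n = s • a n := smul_smul _ _ _
    have h2 : (2 * t) • (enorm' (a n))⁻¹ • a n = (2 * s) • a n := by
      rw [smul_smul, hs]
      ring_nf
    rw [h1, h2]
    haveI := hprob (a n)
    have := Stmt12Aux.infdiv_doubling _ (hID n) s
    rwa [Stmt12Aux.cf1_lin P X hX, Stmt12Aux.cf1_lin P X hX] at this
  have hunit : ∀ v ∈ Dset, enorm' v = 1 := by
    rintro v ⟨n, rfl⟩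
    rw [Stmt12Aux.enorm'_smul, _root_.abs_inv, _root_.abs_of_nonneg (Stmt12Aux.enorm'_nonneg _),
      inv_mul_cancel₀ (Stmt12Aux.enorm'_pos (ha n)).ne']
  -- small ball bound
  have hcont := Stmt12Aux.phi_cont P X hX
  have h0 : ContinuousAt (Stmt12Aux.phi P X) 0 := hcont.continuousAt
  rw [Metric.continuousAt_iff] at h0
  obtain ⟨δ₀, hδ₀, hballφ⟩ := h0 (1/2) (by norm_num)
  set δ := δ₀ / 2 with hδdef
  have δpos : 0 < δ := by positivity
  have hδ : ∀ v : Fin d → ℝ, ‖v‖ ≤ δ → (1/2 : ℝ) ≤ ‖Stmt12Aux.phi P X v‖ := by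
    intro v hv
    have hd : dist v 0 < δ₀ := by
      rw [dist_zero_right]
      linarith
    have := hballφ hd
    rw [Stmt12Aux.phi_zero P X, dist_eq_norm] at this
    have h1 : ‖(1 : ℂ)‖ - ‖(1 : ℂ) - Stmt12Aux.phi P X v‖ ≤ ‖Stmt12Aux.phi P X v‖ := by
      have := norm_sub_norm_le (1 : ℂ) ((1 : ℂ) - Stmt12Aux.phi P X v)
      simpa using this
    rw [norm_sub_rev] at this
    simp only [norm_one] at h1
    linarith
  -- induction: uniform lower bound on the rays
  have hk : ∀ k : ℕ, ∀ v ∈ Dset, ∀ t : ℝ, |t| ≤ 2 ^ k * δ →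
      (1/2 : ℝ) ^ (4 ^ k) ≤ ‖Stmt12Aux.phi P X (t • v)‖ := by
    intro k
    induction k with
    | zero =>
        intro v hv t ht
        rw [pow_zero, one_mul] at ht
        have hnorm : ‖t • v‖ ≤ δ := by
          rw [norm_smul, Real.norm_eq_abs]
          have h1 : ‖v‖ ≤ 1 := by
            have := Stmt12Aux.norm_le_enorm' v
            rw [hunit v hv] at this
            exact this
          calc |t| * ‖v‖ ≤ |t| * 1 := mul_le_mul_of_nonneg_left h1 (abs_nonneg t)
            _ = |t| := mul_one _
            _ ≤ δ := ht
        simpa using hδ _ hnorm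
    | succ k ih =>
        intro v hv t ht
        have hhalf : |t / 2| ≤ 2 ^ k * δ := by
          rw [_root_.abs_div, _root_.abs_two]
          rw [pow_succ] at ht
          linarith
        calc (1/2 : ℝ) ^ (4 ^ (k + 1)) = ((1/2 : ℝ) ^ (4 ^ k)) ^ 4 := by
              rw [← pow_mul, pow_succ]
          _ ≤ ‖Stmt12Aux.phi P X ((t / 2) • v)‖ ^ 4 :=
              pow_le_pow_left₀ (by positivity) (ih v hv (t / 2) hhalf) 4
          _ ≤ ‖Stmt12Aux.phi P X ((2 * (t / 2)) • v)‖ := hdoubD v hv (t / 2)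
          _ = ‖Stmt12Aux.phi P X (t • v)‖ := by
              rw [show 2 * (t / 2) = t by ring]
  -- non-vanishing on the closed cone
  have hcone : ∀ t : ℝ, ∀ v ∈ closure Dset, Stmt12Aux.phi P X (t • v) ≠ 0 := by
    intro t
    obtain ⟨kn, hkn⟩ := exists_nat_gt (|t| / δ)
    have h2k : (kn : ℝ) ≤ 2 ^ kn := by
      exact_mod_cast (Nat.lt_two_pow_self (n := kn)).le
    have hkk : |t| ≤ 2 ^ kn * δ := by
      have h1 : |t| / δ ≤ 2 ^ kn := hkn.le.trans h2k
      rw [div_le_iff₀ δpos] at h1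
      linarith
    set c := (1/2 : ℝ) ^ (4 ^ kn) with hc
    have hcpos : 0 < c := by positivity
    have hclosed : IsClosed {x : Fin d → ℝ | c ≤ ‖Stmt12Aux.phi P X (t • x)‖} := by
      apply isClosed_le continuous_const
      exact (hcont.comp (continuous_const_smul t : Continuous fun x : Fin d → ℝ => t • x)).norm
    have hsubset : Dset ⊆ {x | c ≤ ‖Stmt12Aux.phi P X (t • x)‖} := fun v hv => hk kn v hv t hkk
    intro v hv hcontra
    have hctr := closure_minimal hsubset hclosed hv
    rw [Set.mem_setOf_eq, hcontra] at hctr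
    simp only [norm_zero] at hctr
    linarith
  -- geometry: translate z into the cone by a lattice vector
  obtain ⟨ε, hεpos, hballU⟩ := Metric.isOpen_iff.mp hUopen w hwU
  have hwS' : enorm' w = 1 := hwS
  set sd := Real.sqrt d with hsd
  have hsd0 : 0 ≤ sd := Real.sqrt_nonneg _
  have hπ : 0 < π := Real.pi_pos
  set R := π * sd + 2 * π * sd / ε + 2 with hR
  have hRpos : 0 < R := by positivity
  set m : Fin d → ℤ := fun j => round ((R * w j - z j) / (2 * π)) with hm
  set y : Fin d → ℝ := z + fun j => 2 * π * (m j : ℝ) with hy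
  have hcoord : ∀ j, |y j - R * w j| ≤ π := by
    intro j
    have h1 : y j - R * w j = -(2 * π * ((R * w j - z j) / (2 * π) - (m j : ℝ))) := by
      rw [hy]
      simp only [Pi.add_apply]
      field_simp
      ring
    rw [h1, _root_.abs_neg, _root_.abs_mul]
    have h2 : |(R * w j - z j) / (2 * π) - (m j : ℝ)| ≤ 1/2 := abs_sub_round _
    have h3 : |2 * π| = 2 * π := _root_.abs_of_pos (by positivity)
    rw [h3]
    nlinarith
  have hyRw : enorm' (y - R • w) ≤ sd * π := by
    apply Stmt12Aux.enorm'_le_of_coords _ π hπ.le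
    intro j
    have h1 : (y - R • w) j = y j - R * w j := by
      simp [Pi.sub_apply, Pi.smul_apply, smul_eq_mul]
    rw [h1]
    exact hcoord j
  have hRw : enorm' (R • w) = R := by
    rw [Stmt12Aux.enorm'_smul, hwS', mul_one, _root_.abs_of_pos hRpos]
  have htri : |enorm' y - enorm' (R • w)| ≤ enorm' (y - R • w) := Stmt12Aux.abs_sub_enorm' _ _
  set t0 := enorm' y with ht0
  have ht0lb : R - sd * π ≤ t0 := by
    rw [hRw] at htri
    have := abs_le.mp (htri.trans hyRw)
    linarith [this.1]
  have ht0ub : |R - t0| ≤ sd * π := by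
    rw [hRw] at htri
    rw [abs_sub_comm] at htri
    exact htri.trans hyRw
  have hεt0 : 2 * π * sd / ε + 2 ≤ t0 := by
    rw [hR] at ht0lb
    linarith
  have ht0pos : 0 < t0 := by
    have : (0:ℝ) < 2 * π * sd / ε + 2 := by positivity
    linarith
  set u0 := t0⁻¹ • y with hu0
  have hu0S : enorm' u0 = 1 := by
    rw [hu0, Stmt12Aux.enorm'_smul, _root_.abs_inv, _root_.abs_of_pos ht0pos, ← ht0,
      inv_mul_cancel₀ ht0pos.ne']
  have hu0w : dist u0 w < ε := by
    have hdiff : u0 - w = t0⁻¹ • (y - t0 • w) := by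
      rw [hu0, smul_sub, smul_smul, inv_mul_cancel₀ ht0pos.ne', one_smul]
    have hsplit : y - t0 • w = (y - R • w) + (R - t0) • w := by
      rw [sub_smul]
      abel
    have hb1 : enorm' ((R - t0) • w) ≤ sd * π := by
      rw [Stmt12Aux.enorm'_smul, hwS', mul_one]
      exact ht0ub
    have hb : enorm' (y - t0 • w) ≤ 2 * (sd * π) := by
      rw [hsplit]
      calc enorm' ((y - R • w) + (R - t0) • w)
          ≤ enorm' (y - R • w) + enorm' ((R - t0) • w) := Stmt12Aux.enorm'_triangle _ _
        _ ≤ sd * π + sd * π := by linarith [hyRw, hb1]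
        _ = 2 * (sd * π) := by ring
    have h1 : dist u0 w = ‖u0 - w‖ := dist_eq_norm _ _
    have h2 : ‖u0 - w‖ ≤ t0⁻¹ * (2 * (sd * π)) := by
      calc ‖u0 - w‖ ≤ enorm' (u0 - w) := Stmt12Aux.norm_le_enorm' _
        _ = |t0⁻¹| * enorm' (y - t0 • w) := by rw [hdiff, Stmt12Aux.enorm'_smul]
        _ = t0⁻¹ * enorm' (y - t0 • w) := by rw [_root_.abs_inv, _root_.abs_of_pos ht0pos]
        _ ≤ t0⁻¹ * (2 * (sd * π)) := by
            apply mul_le_mul_of_nonneg_left hb (by positivity)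
    have h3 : t0⁻¹ * (2 * (sd * π)) < ε := by
      rw [inv_mul_lt_iff₀ ht0pos]
      have h4 : ε * (2 * π * sd / ε + 2) ≤ ε * t0 := by
        apply mul_le_mul_of_nonneg_left hεt0 hεpos.le
      have h5 : ε * (2 * π * sd / ε + 2) = 2 * π * sd + 2 * ε := by
        field_simp
      nlinarith
    rw [h1]
    linarith
  have hu0cl : u0 ∈ closure Dset := by
    apply hsub
    exact ⟨hballU (Metric.mem_ball.mpr hu0w), hu0S⟩
  have hyne : Stmt12Aux.phi P X y ≠ 0 := by
    have h1 := hcone t0 u0 hu0cl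
    rwa [hu0, smul_smul, mul_inv_cancel₀ ht0pos.ne', one_smul] at h1
  have hzy : Stmt12Aux.phi P X z = Stmt12Aux.phi P X y := by
    rw [hy]
    exact (Stmt12Aux.phi_periodic P X hZd z m).symm
  unfold _root_.charFun
  rw [hchar z, hzy]
  exact hyne
end

section
/- Let U be a nonempty open subset of S^{d−1} in the relative topology. Then there exists R > 0 and v ∈ ℝ^d such that the cone U_R := { r c : r ∈ (R,∞), c ∈ U } contains the cube v + [0,2π]^d. -/
open MeasureTheory Complex Real Filter Topology

noncomputable section

private lemma enorm'_eq_norm {d : ℕ} (x : Fin d → ℝ) :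
    enorm' x = ‖(WithLp.equiv 2 (Fin d → ℝ)).symm x‖ := by
  rw [EuclideanSpace.norm_eq]
  simp only [enorm', WithLp.equiv_symm_apply, WithLp.ofLp_toLp, Real.norm_eq_abs, _root_.sq_abs]

private lemma enorm'_nonneg {d : ℕ} (x : Fin d → ℝ) : 0 ≤ enorm' x := Real.sqrt_nonneg _

private lemma enorm'_smul {d : ℕ} (r : ℝ) (x : Fin d → ℝ) :
    enorm' (r • x) = |r| * enorm' x := by
  rw [enorm'_eq_norm, enorm'_eq_norm,
    show (WithLp.equiv 2 (Fin d → ℝ)).symm (r • x)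
      = r • (WithLp.equiv 2 (Fin d → ℝ)).symm x from rfl,
    norm_smul, Real.norm_eq_abs]

private lemma abs_enorm'_sub {d : ℕ} (x y : Fin d → ℝ) :
    |enorm' x - enorm' y| ≤ enorm' (x - y) := by
  rw [enorm'_eq_norm, enorm'_eq_norm, enorm'_eq_norm,
    show (WithLp.equiv 2 (Fin d → ℝ)).symm (x - y)
      = (WithLp.equiv 2 (Fin d → ℝ)).symm x - (WithLp.equiv 2 (Fin d → ℝ)).symm y from rfl]
  exact abs_norm_sub_norm_le _ _

private lemma enorm'_le_of_abs_le {d : ℕ} {z : Fin d → ℝ} {a : ℝ} (ha : 0 ≤ a)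
    (h : ∀ j, |z j| ≤ a) : enorm' z ≤ a * Real.sqrt d := by
  have h1 : ∑ j, z j ^ 2 ≤ (d : ℝ) * a ^ 2 := by
    calc ∑ j, z j ^ 2 ≤ ∑ _j : Fin d, a ^ 2 :=
          Finset.sum_le_sum fun j _ => by nlinarith [h j, abs_nonneg (z j), _root_.sq_abs (z j)]
    _ = (d : ℝ) * a ^ 2 := by simp
  calc enorm' z ≤ Real.sqrt ((d : ℝ) * a ^ 2) := Real.sqrt_le_sqrt h1
  _ = a * Real.sqrt d := by
      rw [Real.sqrt_mul (Nat.cast_nonneg d), Real.sqrt_sq ha, mul_comm]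

private lemma enorm'_continuous {d : ℕ} : Continuous (enorm' (d := d)) := by
  unfold enorm'
  exact (continuous_finset_sum _ fun j _ => (continuous_apply j).pow 2).sqrt

theorem stmt15 {d : ℕ} (U : Set (Fin d → ℝ))
    (hrel : ∃ V : Set (Fin d → ℝ), IsOpen V ∧ U = V ∩ {x | enorm' x = 1})
    (hne : U.Nonempty) :
    ∃ R > (0 : ℝ), ∃ v : Fin d → ℝ,
      {x : Fin d → ℝ | ∀ j, v j ≤ x j ∧ x j ≤ v j + 2 * π} ⊆
        {x : Fin d → ℝ | ∃ r > R, ∃ c ∈ U, x = r • c} := by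
  obtain ⟨V, hVopen, hUV⟩ := hrel
  obtain ⟨c₀, hc₀U⟩ := hne
  have hc₀V : c₀ ∈ V := (hUV ▸ hc₀U).1
  have hc₀n : enorm' c₀ = 1 := (hUV ▸ hc₀U).2
  set N : (Fin d → ℝ) → (Fin d → ℝ) := fun x => (enorm' x)⁻¹ • x with hN
  set s : Set (Fin d → ℝ) := {x | enorm' x ≠ 0} with hs
  have hsopen : IsOpen s := isOpen_ne.preimage enorm'_continuous
  have hNcont : ContinuousOn N s := fun x hx =>
    ((enorm'_continuous.continuousAt.inv₀ hx).smul continuousAt_id).continuousWithinAt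
  have hWopen : IsOpen (s ∩ N ⁻¹' V) := hNcont.isOpen_inter_preimage hsopen hVopen
  have hc₀W : c₀ ∈ s ∩ N ⁻¹' V := by
    refine ⟨by simp [hs, hc₀n], ?_⟩
    simp only [Set.mem_preimage, hN, hc₀n, inv_one, one_smul]
    exact hc₀V
  obtain ⟨ε, hε, hball⟩ := Metric.isOpen_iff.1 hWopen c₀ hc₀W
  have hπ := Real.pi_pos
  have hsd : (0:ℝ) ≤ Real.sqrt d := Real.sqrt_nonneg _
  set t : ℝ := 2 * π / ε + 2 * π * Real.sqrt d + 2 with hT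
  have ht : 0 < t := by positivity
  refine ⟨1, one_pos, fun j => t * c₀ j, fun x hx => ?_⟩
  simp only [Set.mem_setOf_eq] at hx ⊢
  set y : Fin d → ℝ := t⁻¹ • x with hy
  have hxy : x = t • y := (smul_inv_smul₀ ht.ne' x).symm
  have habs : ∀ j, |x j - t * c₀ j| ≤ 2 * π := fun j => by
    obtain ⟨h1, h2⟩ := hx j
    rw [abs_le]; constructor <;> linarith
  have hyW : y ∈ s ∩ N ⁻¹' V := by
    apply hball
    rw [Metric.mem_ball, dist_pi_lt_iff hε]
    intro j
    have hyj : y j - c₀ j = t⁻¹ * (x j - t * c₀ j) := by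
      have : y j = t⁻¹ * x j := rfl
      rw [this]; field_simp
    have h2 : t⁻¹ * |x j - t * c₀ j| ≤ t⁻¹ * (2 * π) :=
      mul_le_mul_of_nonneg_left (habs j) (by positivity)
    have h3 : t⁻¹ * (2 * π) < ε := by
      rw [inv_mul_lt_iff₀ ht]
      have het : t * ε = 2 * π + ε * (2 * π * Real.sqrt d + 2) := by
        rw [hT]; field_simp; ring
      nlinarith [mul_pos hε (by positivity : (0:ℝ) < 2 * π * Real.sqrt d + 2)]
    calc dist (y j) (c₀ j) = |y j - c₀ j| := Real.dist_eq _ _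
    _ = t⁻¹ * |x j - t * c₀ j| := by rw [hyj, abs_mul, abs_inv, abs_of_pos ht]
    _ < ε := lt_of_le_of_lt h2 h3
  obtain ⟨hy0, hyV⟩ := hyW
  have hy0' : 0 < enorm' y := lt_of_le_of_ne (enorm'_nonneg y) (Ne.symm hy0)
  have hex : enorm' x = t * enorm' y := by
    rw [hxy, enorm'_smul, abs_of_pos ht]
  have hex0 : 0 < enorm' x := by rw [hex]; positivity
  refine ⟨enorm' x, ?_, (enorm' x)⁻¹ • x, ?_, (smul_inv_smul₀ hex0.ne' x).symm⟩
  · have h1 : |enorm' x - enorm' (t • c₀)| ≤ enorm' (x - t • c₀) := abs_enorm'_sub _ _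
    have h2 : enorm' (t • c₀) = t := by rw [enorm'_smul, hc₀n, abs_of_pos ht, mul_one]
    have h3 : enorm' (x - t • c₀) ≤ 2 * π * Real.sqrt d :=
      enorm'_le_of_abs_le (by positivity) fun j => by
        have : (x - t • c₀) j = x j - t * c₀ j := rfl
        rw [this]; exact habs j
    rw [h2, abs_le] at h1
    have h4 : (0:ℝ) < 2 * π / ε := by positivity
    have h5 : t - 2 * π * Real.sqrt d ≤ enorm' x := by linarith [h1.1, h3]
    rw [hT] at h5
    linarith [h4, h5]
  · rw [hUV]
    constructor
    · have hNx : (enorm' x)⁻¹ • x = (enorm' y)⁻¹ • y := by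
        rw [hex, hxy, mul_inv, smul_smul]
        congr 1
        field_simp
      rw [hNx]
      exact hyV
    · simp only [Set.mem_setOf_eq]
      rw [enorm'_smul, abs_inv, abs_of_pos hex0, inv_mul_cancel₀ hex0.ne']
end
end
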